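/- arXiv:1208.6173 — 5 statements merged into one kernel-verified Lean document; each statement's English description precedes it below -/
import Mathlib

section
/- For every h ≥ 1 and k ≥ 0, twice the number B(h,k) of 'sectionally inverse or equal' equivalence classes of permutations of {1,…,h} with k inversions equals the sum over s = 1,…,h and t = 0,…,k of (I(s,t) + IT(s,t)) · B(h−s, k−t), where I(s,t) is the number of irreducible permutations of {1,…,s} with t inversions and IT(s,t) is the number of irreducible involutions of {1,…,s} with t inversions. -/
/-- The number of inversions of a permutation of `{1,…,h}` (represented as `Fin h`). -/
def invNum {h : ℕ} (π : Equiv.Perm (Fin h)) : ℕ :=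
  (Finset.univ.filter fun p : Fin h × Fin h => p.1 < p.2 ∧ π p.2 < π p.1).card

/-- A permutation of `{1,…,h}` is irreducible if no proper nonempty initial interval
`{1,…,u}` (with `1 ≤ u < h`) is closed under it. -/
def IrredPerm {h : ℕ} (π : Equiv.Perm (Fin h)) : Prop :=
  ¬ ∃ u : ℕ, 0 < u ∧ u < h ∧ ∀ i : Fin h, i.val < u → (π i).val < u

/-- `P(h,k)`: the number of permutations of `{1,…,h}` with exactly `k` inversions. -/
noncomputable def permCount (h k : ℕ) : ℕ :=
  Nat.card {π : Equiv.Perm (Fin h) // invNum π = k}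

/-- `I(h,k)`: the number of irreducible permutations of `{1,…,h}` with `k` inversions. -/
noncomputable def irrCount (h k : ℕ) : ℕ :=
  Nat.card {π : Equiv.Perm (Fin h) // IrredPerm π ∧ invNum π = k}

/-- `T(h,k)`: the number of involutions of `{1,…,h}` with `k` inversions. -/
noncomputable def invoCount (h k : ℕ) : ℕ :=
  Nat.card {π : Equiv.Perm (Fin h) // π * π = 1 ∧ invNum π = k}

/-- `IT(h,k)`: the number of irreducible involutions of `{1,…,h}` with `k` inversions. -/
noncomputable def irrInvoCount (h k : ℕ) : ℕ :=
  Nat.card {π : Equiv.Perm (Fin h) // π * π = 1 ∧ IrredPerm π ∧ invNum π = k}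

/-- A section of a permutation of `{1,…,h}`: a nonempty interval `[u,v]` such that
`[1,u-1]`, `[u,v]` and `[v+1,h]` are all closed under the permutation.
(Here `Fin h` represents `{1,…,h}`, the element `i : Fin h` standing for `i.val + 1`.) -/
def IsSection {h : ℕ} (π : Equiv.Perm (Fin h)) (A : Set (Fin h)) : Prop :=
  ∃ u v : ℕ, u ≤ v ∧ v < h ∧ A = {i : Fin h | u ≤ i.val ∧ i.val ≤ v} ∧
    (∀ i : Fin h, i.val < u → (π i).val < u) ∧
    (∀ i : Fin h, u ≤ i.val → i.val ≤ v → u ≤ (π i).val ∧ (π i).val ≤ v) ∧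
    (∀ i : Fin h, v < i.val → v < (π i).val)

/-- A segment of a permutation: a section that is minimal with respect to inclusion. -/
def IsSegment {h : ℕ} (π : Equiv.Perm (Fin h)) (A : Set (Fin h)) : Prop :=
  IsSection π A ∧ ∀ B, IsSection π B → B ⊆ A → B = A

/-- Two permutations are sectionally inverse or equal: they have the same segments, and on
each segment the first one restricts either to the restriction of the second one or to the
restriction of its inverse. -/
def SIE {h : ℕ} (σ π : Equiv.Perm (Fin h)) : Prop :=
  (∀ A, IsSegment σ A ↔ IsSegment π A) ∧
  ∀ A, IsSegment π A → (∀ i ∈ A, σ i = π i) ∨ (∀ i ∈ A, σ i = π⁻¹ i)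

/-- `B(h,k)`: the number of equivalence classes of the "sectionally inverse or equal"
relation on permutations of `{1,…,h}` consisting of permutations with `k` inversions. -/
noncomputable def bCount (h k : ℕ) : ℕ :=
  Set.ncard {C : Set (Equiv.Perm (Fin h)) | ∃ π, invNum π = k ∧ C = {σ | SIE σ π}}


set_option linter.dupNamespace false

namespace SIEAux

open Equiv

variable {n s : ℕ}

open Equiv Finset



/-- `{0,…,u-1}` is closed under `π`. -/
def ClosedAt (π : Perm (Fin n)) (u : ℕ) : Prop :=
  ∀ i : Fin n, i.val < u → (π i).val < u

lemma closedAt_zero (π : Perm (Fin n)) : ClosedAt π 0 :=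
  fun _ hi => absurd hi (Nat.not_lt_zero _)

lemma closedAt_of_le (π : Perm (Fin n)) {u : ℕ} (hu : n ≤ u) : ClosedAt π u :=
  fun i _ => lt_of_lt_of_le (π i).isLt hu

lemma closedAt_inv {π : Perm (Fin n)} {u : ℕ} (h : ClosedAt π u) : ClosedAt π⁻¹ u := by
  classical
  intro i hi
  set S : Finset (Fin n) := Finset.univ.filter (fun j => j.val < u) with hS
  have himg : S.image π = S := by
    apply Finset.eq_of_subset_of_card_le
    · intro x hx
      simp only [hS, Finset.mem_image, Finset.mem_filter, Finset.mem_univ, true_and] at hx ⊢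
      obtain ⟨j, hj, rfl⟩ := hx
      exact h j hj
    · rw [Finset.card_image_of_injective _ π.injective]
  have hmem : i ∈ S.image π := by
    rw [himg]; simp [hS, hi]
  obtain ⟨j, hj, hji⟩ := Finset.mem_image.mp hmem
  simp only [hS, Finset.mem_filter, Finset.mem_univ, true_and] at hj
  have : π⁻¹ i = j := by rw [← hji]; simp
  rw [this]; exact hj

lemma closedAt_inv_iff {π : Perm (Fin n)} {u : ℕ} : ClosedAt π⁻¹ u ↔ ClosedAt π u :=
  ⟨fun h => by simpa using closedAt_inv h, closedAt_inv⟩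

lemma ge_of_closedAt {π : Perm (Fin n)} {u : ℕ} (h : ClosedAt π u) {i : Fin n}
    (hi : u ≤ i.val) : u ≤ (π i).val := by
  by_contra hc
  push_neg at hc
  have := closedAt_inv h (π i) hc
  simp only [Perm.inv_def, Equiv.symm_apply_apply] at this
  omega

lemma irredPerm_iff {π : Perm (Fin n)} :
    IrredPerm π ↔ ¬ ∃ u, 0 < u ∧ u < n ∧ ClosedAt π u := Iff.rfl

lemma irredPerm_inv {π : Perm (Fin n)} (h : IrredPerm π) : IrredPerm π⁻¹ := by
  rw [irredPerm_iff] at h ⊢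
  rintro ⟨u, h1, h2, h3⟩
  exact h ⟨u, h1, h2, by simpa using closedAt_inv h3⟩

lemma invNum_inv (π : Perm (Fin n)) : invNum π⁻¹ = invNum π := by
  unfold invNum
  apply Finset.card_bij' (fun p _ => ((π⁻¹ p.2 : Fin n), (π⁻¹ p.1 : Fin n)))
    (fun p _ => ((π p.2 : Fin n), (π p.1 : Fin n)))
  · intro a ha
    simp only [Finset.mem_filter, Finset.mem_univ, true_and] at ha ⊢
    exact ⟨ha.2, by simpa using ha.1⟩
  · intro a ha
    simp only [Finset.mem_filter, Finset.mem_univ, true_and] at ha ⊢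
    refine ⟨ha.2, by simpa using ha.1⟩
  · intro a ha; simp
  · intro a ha; simp




/-- Juxtaposition of a permutation of `{0,…,s-1}` and one of `{s,…,n-1}`. -/
def glue (hs : s ≤ n) (ρ : Perm (Fin s)) (τ : Perm (Fin (n - s))) : Perm (Fin n) where
  toFun i :=
    if hi : i.val < s then ⟨(ρ ⟨i.val, hi⟩).val, lt_of_lt_of_le (ρ ⟨i.val, hi⟩).isLt hs⟩
    else ⟨s + (τ ⟨i.val - s, by have := i.isLt; omega⟩).val, by
      have := (τ ⟨i.val - s, by have := i.isLt; omega⟩).isLt; omega⟩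
  invFun i :=
    if hi : i.val < s then ⟨(ρ⁻¹ ⟨i.val, hi⟩).val, lt_of_lt_of_le (ρ⁻¹ ⟨i.val, hi⟩).isLt hs⟩
    else ⟨s + (τ⁻¹ ⟨i.val - s, by have := i.isLt; omega⟩).val, by
      have := (τ⁻¹ ⟨i.val - s, by have := i.isLt; omega⟩).isLt; omega⟩
  left_inv i := by
    by_cases hi : i.val < s
    · have h1 : (ρ ⟨i.val, hi⟩).val < s := (ρ ⟨i.val, hi⟩).isLt
      simp only [hi, dif_pos, h1, Fin.eta]
      apply Fin.ext
      simp
    · have h2 : ¬ (s + (τ ⟨i.val - s, by have := i.isLt; omega⟩).val < s) := by omega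
      simp only [hi, dif_neg, h2, Fin.eta, not_false_iff]
      apply Fin.ext
      simp only [Nat.add_sub_cancel_left, Fin.eta, Perm.inv_def, Equiv.symm_apply_apply]
      omega
  right_inv i := by
    by_cases hi : i.val < s
    · have h1 : (ρ⁻¹ ⟨i.val, hi⟩).val < s := (ρ⁻¹ ⟨i.val, hi⟩).isLt
      simp only [hi, dif_pos, h1, Fin.eta]
      apply Fin.ext
      simp
    · have h2 : ¬ (s + (τ⁻¹ ⟨i.val - s, by have := i.isLt; omega⟩).val < s) := by omega
      simp only [hi, dif_neg, h2, Fin.eta, not_false_iff]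
      apply Fin.ext
      simp only [Nat.add_sub_cancel_left, Fin.eta, Perm.inv_def, Equiv.apply_symm_apply]
      omega

lemma glue_apply_lt (hs : s ≤ n) (ρ : Perm (Fin s)) (τ : Perm (Fin (n - s)))
    (i : Fin n) (hi : i.val < s) :
    ((glue hs ρ τ) i).val = (ρ ⟨i.val, hi⟩).val := by
  show ((if hi : i.val < s then _ else _ : Fin n)).val = _
  rw [dif_pos hi]

lemma glue_apply_ge (hs : s ≤ n) (ρ : Perm (Fin s)) (τ : Perm (Fin (n - s)))
    (i : Fin n) (hi : s ≤ i.val) (p : i.val - s < n - s) :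
    ((glue hs ρ τ) i).val = s + (τ ⟨i.val - s, p⟩).val := by
  have hi' : ¬ i.val < s := by omega
  show ((if h : i.val < s then _ else _ : Fin n)).val = _
  rw [dif_neg hi']

lemma glue_inv (hs : s ≤ n) (ρ : Perm (Fin s)) (τ : Perm (Fin (n - s))) :
    (glue hs ρ τ)⁻¹ = glue hs ρ⁻¹ τ⁻¹ :=
  Equiv.ext fun _ => rfl


lemma mk_shift_eq {x : Fin n} (hx : s ≤ x.val) (p : s + (x.val - s) < n) :
    (⟨s + (x.val - s), p⟩ : Fin n) = x :=
  Fin.ext (by show s + (x.val - s) = x.val; omega)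

lemma closedAt_glue_le (hs : s ≤ n) (ρ : Perm (Fin s)) (τ : Perm (Fin (n - s)))
    {u : ℕ} (hu : u ≤ s) : ClosedAt (glue hs ρ τ) u ↔ ClosedAt ρ u := by
  constructor
  · intro hc j hj
    have hjs : (j : ℕ) < s := j.isLt
    have hj' : ((⟨j.val, lt_of_lt_of_le hjs hs⟩ : Fin n)).val < u := hj
    have := hc _ hj'
    rwa [glue_apply_lt hs ρ τ _ hjs, Fin.eta] at this
  · intro hc i hi
    have his : i.val < s := lt_of_lt_of_le hi hu
    rw [glue_apply_lt hs ρ τ i his]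
    exact hc _ hi

lemma closedAt_glue_ge (hs : s ≤ n) (ρ : Perm (Fin s)) (τ : Perm (Fin (n - s)))
    {u : ℕ} (hu : s ≤ u) : ClosedAt (glue hs ρ τ) u ↔ ClosedAt τ (u - s) := by
  constructor
  · intro hc j hj
    have hjn : s + j.val < n := by have := j.isLt; omega
    have hj' : ((⟨s + j.val, hjn⟩ : Fin n)).val < u := by show s + j.val < u; omega
    have hb : (⟨s + j.val, hjn⟩ : Fin n).val - s < n - s := by
      show s + j.val - s < n - s; have := j.isLt; omega
    have h2 := hc _ hj'
    rw [glue_apply_ge hs ρ τ _ (by show s ≤ s + j.val; omega) hb] at h2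
    have hje : (⟨(⟨s + j.val, hjn⟩ : Fin n).val - s, hb⟩ : Fin (n - s)) = j := by
      apply Fin.ext; show (s + j.val) - s = j.val; omega
    rw [hje] at h2
    omega
  · intro hc i hi
    by_cases his : i.val < s
    · rw [glue_apply_lt hs ρ τ i his]
      have := (ρ ⟨i.val, his⟩).isLt
      omega
    · push_neg at his
      have hb : i.val - s < n - s := by have := i.isLt; omega
      rw [glue_apply_ge hs ρ τ i his hb]
      have := hc ⟨i.val - s, hb⟩ (by show i.val - s < u - s; omega)
      show s + _ < u
      omega

lemma exists_glue {π : Perm (Fin n)} (hs : s ≤ n) (hc : ClosedAt π s) :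
    ∃ (ρ : Perm (Fin s)) (τ : Perm (Fin (n - s))), π = glue hs ρ τ := by
  have hc' : ClosedAt π⁻¹ s := closedAt_inv hc
  refine ⟨⟨fun j => ⟨(π ⟨j.val, lt_of_lt_of_le j.isLt hs⟩).val, hc _ j.isLt⟩,
            fun j => ⟨(π⁻¹ ⟨j.val, lt_of_lt_of_le j.isLt hs⟩).val, hc' _ j.isLt⟩, ?_, ?_⟩,
         ⟨fun j => ⟨(π ⟨s + j.val, by have := j.isLt; omega⟩).val - s, by
              have h1 := (π ⟨s + j.val, by have := j.isLt; omega⟩).isLt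
              have h2 := ge_of_closedAt hc (i := ⟨s + j.val, by have := j.isLt; omega⟩)
                (by show s ≤ s + j.val; omega)
              omega⟩,
          fun j => ⟨(π⁻¹ ⟨s + j.val, by have := j.isLt; omega⟩).val - s, by
              have h1 := (π⁻¹ ⟨s + j.val, by have := j.isLt; omega⟩).isLt
              have h2 := ge_of_closedAt hc' (i := ⟨s + j.val, by have := j.isLt; omega⟩)
                (by show s ≤ s + j.val; omega)
              omega⟩, ?_, ?_⟩, ?_⟩
  · intro j; apply Fin.ext; simp
  · intro j; apply Fin.ext; simp
  · intro j
    have hjn : s + j.val < n := by have := j.isLt; omega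
    have h2 : s ≤ (π ⟨s + j.val, hjn⟩).val :=
      ge_of_closedAt hc (by show s ≤ s + j.val; omega)
    apply Fin.ext
    simp only []
    rw [mk_shift_eq h2]
    simp
  · intro j
    have hjn : s + j.val < n := by have := j.isLt; omega
    have h2 : s ≤ (π⁻¹ ⟨s + j.val, hjn⟩).val :=
      ge_of_closedAt hc' (by show s ≤ s + j.val; omega)
    apply Fin.ext
    simp only []
    rw [mk_shift_eq h2]
    simp
  · apply Equiv.ext
    intro i
    apply Fin.ext
    by_cases hi : i.val < s
    · rw [glue_apply_lt hs _ _ i hi]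
      simp
    · push_neg at hi
      have hb : i.val - s < n - s := by have := i.isLt; omega
      rw [glue_apply_ge hs _ _ i hi hb]
      show (π i).val = s + ((π ⟨s + (i.val - s), _⟩).val - s)
      rw [mk_shift_eq hi]
      have h2 := ge_of_closedAt hc (i := i) hi
      omega



lemma invNum_glue (hs : s ≤ n) (ρ : Perm (Fin s)) (τ : Perm (Fin (n - s))) :
    invNum (glue hs ρ τ) = invNum ρ + invNum τ := by
  classical
  set g := glue hs ρ τ with hg
  have hf1inj : Function.Injective
      (fun q : Fin s × Fin s => ((⟨q.1.val, lt_of_lt_of_le q.1.isLt hs⟩ : Fin n),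
        (⟨q.2.val, lt_of_lt_of_le q.2.isLt hs⟩ : Fin n))) := by
    intro a b hab
    simp only [Prod.mk.injEq, Fin.mk.injEq] at hab
    exact Prod.ext (Fin.ext hab.1) (Fin.ext hab.2)
  have hf2inj : Function.Injective
      (fun q : Fin (n - s) × Fin (n - s) => ((⟨s + q.1.val, by have := q.1.isLt; omega⟩ : Fin n),
        (⟨s + q.2.val, by have := q.2.isLt; omega⟩ : Fin n))) := by
    intro a b hab
    simp only [Prod.mk.injEq, Fin.mk.injEq] at hab
    exact Prod.ext (Fin.ext (by omega)) (Fin.ext (by omega))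
  have hsplit : (Finset.univ.filter fun p : Fin n × Fin n => p.1 < p.2 ∧ g p.2 < g p.1)
      = ((Finset.univ.filter fun q : Fin s × Fin s => q.1 < q.2 ∧ ρ q.2 < ρ q.1).image
          (fun q => ((⟨q.1.val, lt_of_lt_of_le q.1.isLt hs⟩ : Fin n),
            (⟨q.2.val, lt_of_lt_of_le q.2.isLt hs⟩ : Fin n)))) ∪
        ((Finset.univ.filter fun q : Fin (n - s) × Fin (n - s) => q.1 < q.2 ∧ τ q.2 < τ q.1).image
          (fun q => ((⟨s + q.1.val, by have := q.1.isLt; omega⟩ : Fin n),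
            (⟨s + q.2.val, by have := q.2.isLt; omega⟩ : Fin n)))) := by
    ext p
    simp only [Finset.mem_filter, Finset.mem_univ, true_and, Finset.mem_union, Finset.mem_image,
      Prod.mk.injEq]
    constructor
    · rintro ⟨h12, hinv⟩
      have h12v : p.1.val < p.2.val := h12
      have hinvv : (g p.2).val < (g p.1).val := hinv
      by_cases h2s : p.2.val < s
      · left
        have h1s : p.1.val < s := by omega
        refine ⟨(⟨p.1.val, h1s⟩, ⟨p.2.val, h2s⟩), ⟨h12v, ?_⟩,
          Prod.ext (Fin.ext rfl) (Fin.ext rfl)⟩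
        rw [hg, glue_apply_lt hs ρ τ p.2 h2s, glue_apply_lt hs ρ τ p.1 h1s] at hinvv
        exact hinvv
      · right
        push_neg at h2s
        have h1s : s ≤ p.1.val := by
          by_contra hl
          push_neg at hl
          rw [hg, glue_apply_lt hs ρ τ p.1 hl,
            glue_apply_ge hs ρ τ p.2 h2s (by have := p.2.isLt; omega)] at hinvv
          have := (ρ ⟨p.1.val, hl⟩).isLt
          omega
        have b1 : p.1.val - s < n - s := by have := p.1.isLt; omega
        have b2 : p.2.val - s < n - s := by have := p.2.isLt; omega
        refine ⟨(⟨p.1.val - s, b1⟩, ⟨p.2.val - s, b2⟩),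
          ⟨by show p.1.val - s < p.2.val - s; omega, ?_⟩,
          Prod.ext (Fin.ext (by show s + (p.1.val - s) = p.1.val; omega))
            (Fin.ext (by show s + (p.2.val - s) = p.2.val; omega))⟩
        rw [hg, glue_apply_ge hs ρ τ p.1 h1s b1, glue_apply_ge hs ρ τ p.2 h2s b2] at hinvv
        show (τ ⟨p.2.val - s, b2⟩).val < (τ ⟨p.1.val - s, b1⟩).val
        omega
    · rintro (⟨q, ⟨hq12, hqinv⟩, rfl⟩ | ⟨q, ⟨hq12, hqinv⟩, rfl⟩)
      · have hq12v : q.1.val < q.2.val := hq12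
        have hqinvv : (ρ q.2).val < (ρ q.1).val := hqinv
        refine ⟨by show q.1.val < q.2.val; exact hq12v, ?_⟩
        show (g _).val < (g _).val
        rw [hg, glue_apply_lt hs ρ τ _ q.2.isLt, glue_apply_lt hs ρ τ _ q.1.isLt]
        simp only [Fin.eta]
        exact hqinvv
      · have hq12v : q.1.val < q.2.val := hq12
        have hqinvv : (τ q.2).val < (τ q.1).val := hqinv
        refine ⟨by show s + q.1.val < s + q.2.val; omega, ?_⟩
        show (g _).val < (g _).val
        rw [hg, glue_apply_ge hs ρ τ _ (by show s ≤ s + q.2.val; omega)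
            (by show s + q.2.val - s < n - s; have := q.2.isLt; omega),
          glue_apply_ge hs ρ τ _ (by show s ≤ s + q.1.val; omega)
            (by show s + q.1.val - s < n - s; have := q.1.isLt; omega)]
        have e1 : (⟨(⟨s + q.1.val, by have := q.1.isLt; omega⟩ : Fin n).val - s,
            by show s + q.1.val - s < n - s; have := q.1.isLt; omega⟩ : Fin (n - s)) = q.1 :=
          Fin.ext (by show s + q.1.val - s = q.1.val; omega)
        have e2 : (⟨(⟨s + q.2.val, by have := q.2.isLt; omega⟩ : Fin n).val - s,
            by show s + q.2.val - s < n - s; have := q.2.isLt; omega⟩ : Fin (n - s)) = q.2 :=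
          Fin.ext (by show s + q.2.val - s = q.2.val; omega)
        rw [e1, e2]
        omega
  have hdisj : Disjoint
      ((Finset.univ.filter fun q : Fin s × Fin s => q.1 < q.2 ∧ ρ q.2 < ρ q.1).image
          (fun q => ((⟨q.1.val, lt_of_lt_of_le q.1.isLt hs⟩ : Fin n),
            (⟨q.2.val, lt_of_lt_of_le q.2.isLt hs⟩ : Fin n))))
      ((Finset.univ.filter fun q : Fin (n - s) × Fin (n - s) => q.1 < q.2 ∧ τ q.2 < τ q.1).image
          (fun q => ((⟨s + q.1.val, by have := q.1.isLt; omega⟩ : Fin n),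
            (⟨s + q.2.val, by have := q.2.isLt; omega⟩ : Fin n)))) := by
    rw [Finset.disjoint_left]
    rintro p hp1 hp2
    simp only [Finset.mem_image, Finset.mem_filter, Finset.mem_univ, true_and] at hp1 hp2
    obtain ⟨q, _, hq⟩ := hp1
    obtain ⟨q', _, hq'⟩ := hp2
    rw [← hq'] at hq
    have := congrArg (fun x => x.2.val) hq
    simp only at this
    have := q.2.isLt
    omega
  show (Finset.univ.filter fun p : Fin n × Fin n => p.1 < p.2 ∧ g p.2 < g p.1).card = _
  rw [hsplit, Finset.card_union_of_disjoint hdisj,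
    Finset.card_image_of_injective _ hf1inj, Finset.card_image_of_injective _ hf2inj]
  rfl




lemma isSection_iff {π : Perm (Fin n)} {A : Set (Fin n)} :
    IsSection π A ↔ ∃ u v : ℕ, u ≤ v ∧ v < n ∧ ClosedAt π u ∧ ClosedAt π (v + 1) ∧
      A = {i : Fin n | u ≤ i.val ∧ i.val ≤ v} := by
  constructor
  · rintro ⟨u, v, huv, hv, hA, h1, h2, h3⟩
    refine ⟨u, v, huv, hv, h1, ?_, hA⟩
    intro i hi
    rcases lt_or_ge i.val u with h | h
    · have := h1 i h; omega
    · have := (h2 i h (by omega)).2; omega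
  · rintro ⟨u, v, huv, hv, hcu, hcv, hA⟩
    refine ⟨u, v, huv, hv, hA, hcu, ?_, ?_⟩
    · intro i h1 h2
      refine ⟨ge_of_closedAt hcu h1, ?_⟩
      have := hcv i (by omega); omega
    · intro i hi
      have := ge_of_closedAt hcv (i := i) (by omega)
      omega

lemma interval_eq_interval_iff {u v u' v' : ℕ} (h1 : u ≤ v) (h2 : v < n) (h3 : u' ≤ v')
    (h4 : v' < n) :
    ({i : Fin n | u ≤ i.val ∧ i.val ≤ v} = {i : Fin n | u' ≤ i.val ∧ i.val ≤ v'}) ↔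
      (u = u' ∧ v = v') := by
  constructor
  · intro hEq
    have e1 := Set.ext_iff.mp hEq ⟨u, by omega⟩
    have e2 := Set.ext_iff.mp hEq ⟨v, h2⟩
    have e3 := Set.ext_iff.mp hEq ⟨u', by omega⟩
    have e4 := Set.ext_iff.mp hEq ⟨v', h4⟩
    simp only [Set.mem_setOf_eq] at e1 e2 e3 e4
    omega
  · rintro ⟨rfl, rfl⟩; rfl

lemma isSegment_iff {π : Perm (Fin n)} {A : Set (Fin n)} :
    IsSegment π A ↔ ∃ u v : ℕ, u ≤ v ∧ v < n ∧ ClosedAt π u ∧ ClosedAt π (v + 1) ∧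
      (∀ w, u < w → w ≤ v → ¬ ClosedAt π w) ∧
      A = {i : Fin n | u ≤ i.val ∧ i.val ≤ v} := by
  constructor
  · rintro ⟨hsec, hmin⟩
    obtain ⟨u, v, huv, hv, hcu, hcv, hA⟩ := isSection_iff.mp hsec
    refine ⟨u, v, huv, hv, hcu, hcv, ?_, hA⟩
    intro w hw1 hw2 hcw
    have hsecB : IsSection π {i : Fin n | u ≤ i.val ∧ i.val ≤ w - 1} :=
      isSection_iff.mpr ⟨u, w - 1, by omega, by omega, hcu, by
        have : w - 1 + 1 = w := by omega
        rw [this]; exact hcw, rfl⟩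
    have hsub : {i : Fin n | u ≤ i.val ∧ i.val ≤ w - 1} ⊆ A := by
      rw [hA]; intro i hi; simp only [Set.mem_setOf_eq] at hi ⊢; omega
    have hBA := hmin _ hsecB hsub
    have := Set.ext_iff.mp hBA ⟨v, hv⟩
    simp only [Set.mem_setOf_eq] at this
    rw [hA] at this
    simp only [Set.mem_setOf_eq] at this
    omega
  · rintro ⟨u, v, huv, hv, hcu, hcv, hint, hA⟩
    refine ⟨isSection_iff.mpr ⟨u, v, huv, hv, hcu, hcv, hA⟩, ?_⟩
    rintro B hB hBA
    obtain ⟨u', v', huv', hv', hcu', hcv', hB⟩ := isSection_iff.mp hB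
    rw [hA] at hBA
    rw [hB] at hBA
    have m1 := hBA (show (⟨u', by omega⟩ : Fin n) ∈ _ by simp only [Set.mem_setOf_eq]; omega)
    have m2 := hBA (show (⟨v', by omega⟩ : Fin n) ∈ _ by simp only [Set.mem_setOf_eq]; omega)
    simp only [Set.mem_setOf_eq] at m1 m2
    have hu' : u' = u := by
      by_contra hne
      exact hint u' (by omega) (by omega) hcu'
    have hv'' : v' = v := by
      by_contra hne
      exact hint (v' + 1) (by omega) (by omega) hcv'
    rw [hB, hA, hu', hv'']
  
lemma mem_section {π : Perm (Fin n)} {A : Set (Fin n)} (hA : IsSection π A) {i : Fin n}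
    (hi : i ∈ A) : π i ∈ A := by
  obtain ⟨u, v, huv, hv, hAeq, h1, h2, h3⟩ := hA
  rw [hAeq] at hi ⊢
  simp only [Set.mem_setOf_eq] at hi ⊢
  exact h2 i hi.1 hi.2

lemma isSection_inv {π : Perm (Fin n)} {A : Set (Fin n)} (hA : IsSection π A) :
    IsSection π⁻¹ A := by
  rw [isSection_iff] at hA ⊢
  obtain ⟨u, v, huv, hv, hcu, hcv, hA⟩ := hA
  exact ⟨u, v, huv, hv, closedAt_inv hcu, closedAt_inv hcv, hA⟩

lemma sie_refl (π : Perm (Fin n)) : SIE π π :=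
  ⟨fun _ => Iff.rfl, fun _ _ => Or.inl fun _ _ => rfl⟩

lemma sie_symm {σ π : Perm (Fin n)} (h : SIE σ π) : SIE π σ := by
  refine ⟨fun A => (h.1 A).symm, fun A hA => ?_⟩
  have hA' : IsSegment π A := (h.1 A).mp hA
  rcases h.2 A hA' with hc | hc
  · exact Or.inl fun i hi => (hc i hi).symm
  · refine Or.inr fun i hi => ?_
    have hπi : π i ∈ A := mem_section hA'.1 hi
    have h2 := hc (π i) hπi
    simp only [Perm.inv_def, Equiv.symm_apply_apply] at h2
    rw [Perm.eq_inv_iff_eq]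
    exact h2

lemma sie_trans {σ π γ : Perm (Fin n)} (h1 : SIE σ π) (h2 : SIE π γ) : SIE σ γ := by
  refine ⟨fun A => (h1.1 A).trans (h2.1 A), fun A hA => ?_⟩
  have hAπ : IsSegment π A := (h2.1 A).mpr hA
  rcases h1.2 A hAπ with hc1 | hc1 <;> rcases h2.2 A hA with hc2 | hc2
  · exact Or.inl fun i hi => (hc1 i hi).trans (hc2 i hi)
  · exact Or.inr fun i hi => (hc1 i hi).trans (hc2 i hi)
  · -- σ = π⁻¹ on A, π = γ on A ⇒ σ = γ⁻¹ on A
    refine Or.inr fun i hi => ?_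
    rw [hc1 i hi]
    have hγi : γ⁻¹ i ∈ A := mem_section (isSection_inv hA.1) hi
    have hthis : π (γ⁻¹ i) = i := by rw [hc2 (γ⁻¹ i) hγi]; simp
    rw [Perm.inv_eq_iff_eq]
    exact hthis.symm
  · -- σ = π⁻¹ on A, π = γ⁻¹ on A ⇒ σ = γ on A
    refine Or.inl fun i hi => ?_
    rw [hc1 i hi]
    have hγi : γ i ∈ A := mem_section hA.1 hi
    have := hc2 (γ i) hγi
    rw [Perm.inv_def, Equiv.symm_apply_apply] at this
    rw [Perm.inv_eq_iff_eq]
    exact this.symm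

lemma sieClass_eq_iff {σ π : Perm (Fin n)} :
    ({τ | SIE τ σ} : Set (Perm (Fin n))) = {τ | SIE τ π} ↔ SIE σ π := by
  constructor
  · intro hEq
    have : σ ∈ ({τ | SIE τ σ} : Set (Perm (Fin n))) := sie_refl σ
    rw [hEq] at this
    exact this
  · intro hσπ
    ext τ
    simp only [Set.mem_setOf_eq]
    exact ⟨fun hτ => sie_trans hτ hσπ, fun hτ => sie_trans hτ (sie_symm hσπ)⟩

lemma closedAt_of_segments {σ π : Perm (Fin n)}
    (himp : ∀ A, IsSegment π A → IsSegment σ A) {u : ℕ} (hu : ClosedAt π u) :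
    ClosedAt σ u := by
  rcases Nat.eq_zero_or_pos u with rfl | hu0
  · exact closedAt_zero σ
  rcases le_or_gt u n with hun | hun
  swap
  · exact closedAt_of_le σ (by omega)
  haveI : DecidablePred (ClosedAt π) := Classical.decPred _
  set a := Nat.findGreatest (ClosedAt π) (u - 1) with ha
  have hPa : ClosedAt π a := Nat.findGreatest_spec (m := 0) (Nat.zero_le _) (closedAt_zero π)
  have ha_le : a ≤ u - 1 := Nat.findGreatest_le _
  have hseg : IsSegment π {i : Fin n | a ≤ i.val ∧ i.val ≤ u - 1} := by
    refine isSegment_iff.mpr ⟨a, u - 1, ha_le, by omega, hPa, ?_, ?_, rfl⟩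
    · have he : u - 1 + 1 = u := by omega
      rw [he]; exact hu
    · intro w hw1 hw2 hcw
      have := Nat.le_findGreatest (n := u - 1) (m := w) (by omega) hcw
      omega
  have hseg' := himp _ hseg
  obtain ⟨u', v', h1, h2, h3, h4, h5, h6⟩ := isSegment_iff.mp hseg'
  have := (interval_eq_interval_iff ha_le (by omega : u - 1 < n) h1 h2).mp h6
  have he : v' + 1 = u := by omega
  rw [← he]
  exact h4

lemma segments_iff_closed {σ π : Perm (Fin n)} :
    (∀ A, IsSegment σ A ↔ IsSegment π A) ↔ (∀ u, ClosedAt σ u ↔ ClosedAt π u) := by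
  constructor
  · intro h u
    exact ⟨closedAt_of_segments (fun A hA => (h A).mp hA),
      closedAt_of_segments (fun A hA => (h A).mpr hA)⟩
  · intro h A
    rw [isSegment_iff, isSegment_iff]
    constructor
    · rintro ⟨u, v, h1, h2, h3, h4, h5, h6⟩
      exact ⟨u, v, h1, h2, (h u).mp h3, (h (v+1)).mp h4,
        fun w hw1 hw2 hc => h5 w hw1 hw2 ((h w).mpr hc), h6⟩
    · rintro ⟨u, v, h1, h2, h3, h4, h5, h6⟩
      exact ⟨u, v, h1, h2, (h u).mpr h3, (h (v+1)).mpr h4,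
        fun w hw1 hw2 hc => h5 w hw1 hw2 ((h w).mp hc), h6⟩




lemma irredPerm_iff' {π : Perm (Fin n)} :
    IrredPerm π ↔ ¬ ∃ u, 0 < u ∧ u < n ∧ ClosedAt π u := Iff.rfl

section GlueSeg
variable (hs : s ≤ n) (ρ ρ' : Perm (Fin s)) (τ τ' : Perm (Fin (n - s)))

lemma glue_segment_iff (h0 : 0 < s) (hirr : IrredPerm ρ) (A : Set (Fin n)) :
    IsSegment (glue hs ρ τ) A ↔
      A = {i : Fin n | i.val < s} ∨
      ∃ u v : ℕ, u ≤ v ∧ v < n - s ∧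
        IsSegment τ {j : Fin (n - s) | u ≤ j.val ∧ j.val ≤ v} ∧
        A = {i : Fin n | s + u ≤ i.val ∧ i.val ≤ s + v} := by
  rw [irredPerm_iff'] at hirr
  push_neg at hirr
  constructor
  · rw [isSegment_iff]
    rintro ⟨u, v, huv, hv, hcu, hcv, hint, hA⟩
    by_cases hvs : v + 1 ≤ s
    · left
      have hu0 : u = 0 := by
        by_contra hne
        have hus : u < s := by omega
        exact hirr u (by omega) hus ((closedAt_glue_le hs ρ τ (by omega)).mp hcu) 
      have hv1 : v + 1 = s := by
        by_contra hne
        exact hirr (v + 1) (by omega) (by omega) ((closedAt_glue_le hs ρ τ (by omega)).mp hcv)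
      rw [hA]
      ext i
      simp only [Set.mem_setOf_eq]
      omega
    · right
      push_neg at hvs
      have hsu : s ≤ u := by
        by_contra hus
        push_neg at hus
        have hu0 : u = 0 := by
          by_contra hne
          exact hirr u (by omega) hus ((closedAt_glue_le hs ρ τ (by omega)).mp hcu)
        have hcs : ClosedAt (glue hs ρ τ) s :=
          (closedAt_glue_ge hs ρ τ (le_refl s)).mpr (by
            have : s - s = 0 := by omega
            rw [this]; exact closedAt_zero τ)
        exact hint s (by omega) (by omega) hcs
      refine ⟨u - s, v - s, by omega, by omega, ?_, ?_⟩
      · rw [isSegment_iff]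
        refine ⟨u - s, v - s, by omega, by omega,
          (closedAt_glue_ge hs ρ τ hsu).mp hcu, ?_, ?_, rfl⟩
        · have he : v - s + 1 = (v + 1) - s := by omega
          rw [he]
          exact (closedAt_glue_ge hs ρ τ (by omega)).mp hcv
        · intro w hw1 hw2 hcw
          refine hint (s + w) (by omega) (by omega) ?_
          have he : s + w - s = w := by omega
          exact (closedAt_glue_ge hs ρ τ (by omega)).mpr (by rw [he]; exact hcw)
      · rw [hA]
        ext i
        simp only [Set.mem_setOf_eq]
        omega
  · rintro (rfl | ⟨u, v, huv, hv, hseg, rfl⟩)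
    · rw [isSegment_iff]
      refine ⟨0, s - 1, by omega, by omega, closedAt_zero _, ?_, ?_, ?_⟩
      · have he : s - 1 + 1 = s := by omega
        rw [he]
        exact (closedAt_glue_le hs ρ τ (le_refl s)).mpr (closedAt_of_le ρ (le_refl s))
      · intro w hw1 hw2 hcw
        exact hirr w (by omega) (by omega) ((closedAt_glue_le hs ρ τ (by omega)).mp hcw)
      · ext i; simp only [Set.mem_setOf_eq]; omega
    · rw [isSegment_iff] at hseg ⊢
      obtain ⟨u', v', huv', hv', hcu', hcv', hint', hI⟩ := hseg
      have huu : u' = u ∧ v' = v := by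
        constructor
        · have := Set.ext_iff.mp hI ⟨u, by omega⟩
          have := Set.ext_iff.mp hI ⟨u', by omega⟩
          simp only [Set.mem_setOf_eq] at *
          omega
        · have := Set.ext_iff.mp hI ⟨v, by omega⟩
          have := Set.ext_iff.mp hI ⟨v', by omega⟩
          simp only [Set.mem_setOf_eq] at *
          omega
      obtain ⟨he1, he2⟩ := huu
      rw [he1] at hcu' hint'
      rw [he2] at hcv' hint'
      refine ⟨s + u, s + v, by omega, by omega, ?_, ?_, ?_, ?_⟩
      · exact (closedAt_glue_ge hs ρ τ (by omega)).mpr (by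
          have he : s + u - s = u := by omega
          rw [he]; exact hcu')
      · exact (closedAt_glue_ge hs ρ τ (by omega)).mpr (by
          have he : s + v + 1 - s = v + 1 := by omega
          rw [he]; exact hcv')
      · intro w hw1 hw2 hcw
        have hws : s ≤ w := by omega
        exact hint' (w - s) (by omega) (by omega) ((closedAt_glue_ge hs ρ τ hws).mp hcw)
      · rfl

lemma agree_first_iff :
    (∀ i ∈ ({i : Fin n | i.val < s} : Set (Fin n)), glue hs ρ' τ' i = glue hs ρ τ i) ↔
      ρ' = ρ := by
  constructor
  · intro hag
    apply Equiv.ext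
    intro j
    have hjs : (j : ℕ) < s := j.isLt
    have := hag ⟨j.val, lt_of_lt_of_le hjs hs⟩ (by simp only [Set.mem_setOf_eq]; exact hjs)
    have hv := congrArg Fin.val this
    rw [glue_apply_lt hs ρ' τ' _ hjs, glue_apply_lt hs ρ τ _ hjs] at hv
    simp only [Fin.eta] at hv
    exact Fin.ext hv
  · rintro rfl i hi
    simp only [Set.mem_setOf_eq] at hi
    apply Fin.ext
    rw [glue_apply_lt hs ρ' τ' i hi, glue_apply_lt hs ρ' τ i hi]

lemma agree_shift_iff (u v : ℕ) (hv : v < n - s) :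
    (∀ i ∈ ({i : Fin n | s + u ≤ i.val ∧ i.val ≤ s + v} : Set (Fin n)),
        glue hs ρ' τ' i = glue hs ρ τ i) ↔
      (∀ j ∈ ({j : Fin (n - s) | u ≤ j.val ∧ j.val ≤ v} : Set (Fin (n - s))), τ' j = τ j) := by
  constructor
  · intro hag j hj
    simp only [Set.mem_setOf_eq] at hj
    have hjn : s + j.val < n := by have := j.isLt; omega
    have := hag ⟨s + j.val, hjn⟩ (by simp only [Set.mem_setOf_eq]; omega)
    have hv' := congrArg Fin.val this
    have hb : (⟨s + j.val, hjn⟩ : Fin n).val - s < n - s := by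
      show s + j.val - s < n - s; have := j.isLt; omega
    rw [glue_apply_ge hs ρ' τ' _ (by show s ≤ s + j.val; omega) hb,
      glue_apply_ge hs ρ τ _ (by show s ≤ s + j.val; omega) hb] at hv'
    have hje : (⟨(⟨s + j.val, hjn⟩ : Fin n).val - s, hb⟩ : Fin (n - s)) = j :=
      Fin.ext (by show s + j.val - s = j.val; omega)
    rw [hje] at hv'
    apply Fin.ext
    omega
  · intro hag i hi
    simp only [Set.mem_setOf_eq] at hi
    have his : s ≤ i.val := by omega
    have hb : i.val - s < n - s := by have := i.isLt; omega
    apply Fin.ext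
    rw [glue_apply_ge hs ρ' τ' i his hb, glue_apply_ge hs ρ τ i his hb]
    have := hag ⟨i.val - s, hb⟩ (by simp only [Set.mem_setOf_eq]; omega)
    rw [this]

lemma sie_glue_iff (h0 : 0 < s) (hirr : IrredPerm ρ) :
    SIE (glue hs ρ' τ') (glue hs ρ τ) ↔ (ρ' = ρ ∨ ρ' = ρ⁻¹) ∧ SIE τ' τ := by
  constructor
  · rintro ⟨hseg, hagree⟩
    have hcl := segments_iff_closed.mp hseg
    have hτcl : ∀ w, ClosedAt τ' w ↔ ClosedAt τ w := by
      intro w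
      have := hcl (s + w)
      rw [closedAt_glue_ge hs ρ' τ' (by omega), closedAt_glue_ge hs ρ τ (by omega)] at this
      have he : s + w - s = w := by omega
      rwa [he] at this
    have hfirst : IsSegment (glue hs ρ τ) {i : Fin n | i.val < s} :=
      (glue_segment_iff hs ρ τ h0 hirr _).mpr (Or.inl rfl)
    have hρ' : ρ' = ρ ∨ ρ' = ρ⁻¹ := by
      rcases hagree _ hfirst with hc | hc
      · exact Or.inl ((agree_first_iff hs ρ ρ' τ τ').mp hc)
      · right
        rw [glue_inv] at hc
        exact (agree_first_iff hs ρ⁻¹ ρ' τ⁻¹ τ').mp hc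
    refine ⟨hρ', segments_iff_closed.mpr hτcl, ?_⟩
    intro B hB
    obtain ⟨u, v, huv, hv, hcu, hcv, hint, hBeq⟩ := isSegment_iff.mp hB
    have hlift : IsSegment (glue hs ρ τ) {i : Fin n | s + u ≤ i.val ∧ i.val ≤ s + v} :=
      (glue_segment_iff hs ρ τ h0 hirr _).mpr (Or.inr ⟨u, v, huv, hv, by rw [← hBeq]; exact hB, rfl⟩)
    rcases hagree _ hlift with hc | hc
    · left
      rw [hBeq]
      exact (agree_shift_iff hs ρ ρ' τ τ' u v hv).mp hc
    · right
      rw [hBeq]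
      rw [glue_inv] at hc
      exact (agree_shift_iff hs ρ⁻¹ ρ' τ⁻¹ τ' u v hv).mp hc
  · rintro ⟨hρ', hττ'⟩
    have hτcl := segments_iff_closed.mp hττ'.1
    have hρcl : ∀ u, ClosedAt ρ' u ↔ ClosedAt ρ u := by
      rcases hρ' with he | he
      · rw [he]; exact fun _ => Iff.rfl
      · rw [he]; exact fun u => closedAt_inv_iff
    have hcl : ∀ u, ClosedAt (glue hs ρ' τ') u ↔ ClosedAt (glue hs ρ τ) u := by
      intro u
      rcases le_or_gt u s with hu | hu
      · rw [closedAt_glue_le hs ρ' τ' hu, closedAt_glue_le hs ρ τ hu]; exact hρcl u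
      · rw [closedAt_glue_ge hs ρ' τ' (by omega), closedAt_glue_ge hs ρ τ (by omega)]
        exact hτcl (u - s)
    refine ⟨segments_iff_closed.mpr hcl, ?_⟩
    intro A hA
    rcases (glue_segment_iff hs ρ τ h0 hirr A).mp hA with rfl | ⟨u, v, huv, hv, hsegτ, rfl⟩
    · rcases hρ' with he | he
      · exact Or.inl ((agree_first_iff hs ρ ρ' τ τ').mpr he)
      · refine Or.inr ?_
        rw [glue_inv]
        exact (agree_first_iff hs ρ⁻¹ ρ' τ⁻¹ τ').mpr he
    · rcases hττ'.2 _ hsegτ with hc | hc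
      · exact Or.inl ((agree_shift_iff hs ρ ρ' τ τ' u v hv).mpr hc)
      · refine Or.inr ?_
        rw [glue_inv]
        exact (agree_shift_iff hs ρ⁻¹ ρ' τ⁻¹ τ' u v hv).mpr hc
end GlueSeg

lemma sie_closedAt_iff {n : ℕ} {σ π : Perm (Fin n)} (h : SIE σ π) :
    ∀ u, ClosedAt σ u ↔ ClosedAt π u :=
  segments_iff_closed.mp h.1

end SIEAux

open SIEAux Equiv


lemma card_eq_sum_fibers {A B : Type*} [Finite A] (f : A → B) (S : Finset B)
    (hS : ∀ a, f a ∈ S) : Nat.card A = ∑ b ∈ S, Nat.card {a // f a = b} := by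
  classical
  haveI : Fintype A := Fintype.ofFinite A
  have e : A ≃ Σ b : {b // b ∈ S}, {a // f a = b.1} :=
    { toFun := fun a => ⟨⟨f a, hS a⟩, ⟨a, rfl⟩⟩
      invFun := fun x => x.2.1
      left_inv := fun a => rfl
      right_inv := by
        rintro ⟨⟨b, hb⟩, a, hfa⟩
        have hfa' : f a = b := hfa
        subst hfa'
        rfl }
  rw [Nat.card_congr e]
  haveI : ∀ b : {b // b ∈ S}, Fintype {a // f a = b.1} := fun b => Fintype.ofFinite _
  rw [Nat.card_eq_fintype_card, Fintype.card_sigma]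
  rw [← Finset.sum_coe_sort S (fun b => Nat.card {a // f a = b})]
  apply Finset.sum_congr rfl
  intro b _
  rw [Nat.card_eq_fintype_card]

lemma ncard_biUnion_eq {α ι : Type*} [Finite α] (S : Finset ι) (f : ι → Set α)
    (hd : ∀ i ∈ S, ∀ j ∈ S, i ≠ j → Disjoint (f i) (f j)) :
    (⋃ i ∈ S, f i).ncard = ∑ i ∈ S, (f i).ncard := by
  classical
  induction S using Finset.induction_on with
  | empty => simp
  | @insert a S' ha ih =>
    rw [Finset.set_biUnion_insert, Finset.sum_insert ha,
      Set.ncard_union_eq ?disj (Set.toFinite _) (Set.toFinite _),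
      ih (fun i hi j hj hij => hd i (Finset.mem_insert_of_mem hi) j
        (Finset.mem_insert_of_mem hj) hij)]
    case disj =>
      apply Set.disjoint_iUnion₂_right.mpr
      intro i hi
      exact hd a (Finset.mem_insert_self a S') i (Finset.mem_insert_of_mem hi)
        (fun he => ha (he ▸ hi))

lemma card_subtype_pair_ne {α : Type*} [Finite α] {a b : α} (hne : b ≠ a) :
    Nat.card {x : α // x = a ∨ x = b} = 2 := by
  have e : {x : α // x = a ∨ x = b} ≃ ↥({a, b} : Set α) :=
    Equiv.subtypeEquivRight (fun x => by simp [Set.mem_insert_iff, Set.mem_singleton_iff])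
  rw [Nat.card_congr e, Nat.card_coe_set_eq, Set.ncard_pair (fun he => hne he.symm)]

lemma card_subtype_pair_self {α : Type*} [Finite α] (a : α) :
    Nat.card {x : α // x = a ∨ x = a} = 1 := by
  have e : {x : α // x = a ∨ x = a} ≃ {x : α // x = a} :=
    Equiv.subtypeEquivRight (fun x => by simp)
  rw [Nat.card_congr e]
  have e2 : {x : α // x = a} ≃ ↥({a} : Set α) :=
    Equiv.subtypeEquivRight (fun x => by simp)
  rw [Nat.card_congr e2, Nat.card_coe_set_eq, Set.ncard_singleton]

lemma card_subtype_single {α : Type*} [Finite α] (a : α) :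
    Nat.card {x : α // x = a} = 1 := by
  have e : {x : α // x = a} ≃ ↥({a} : Set α) :=
    Equiv.subtypeEquivRight (fun x => by simp)
  rw [Nat.card_congr e, Nat.card_coe_set_eq, Set.ncard_singleton]

/-- Auxiliary: classes whose representative splits at `s` with first-block data `t`. -/
def K2 (h k s t : ℕ) : Set (Set (Equiv.Perm (Fin h))) :=
  {C | ∃ (hs : s ≤ h) (ρ : Equiv.Perm (Fin s)) (τ : Equiv.Perm (Fin (h - s))),
    IrredPerm ρ ∧ invNum ρ = t ∧ invNum τ = k - t ∧ C = {σ | SIE σ (SIEAux.glue hs ρ τ)}}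

lemma key_st (h k s t : ℕ) (hs1 : 1 ≤ s) (hs2 : s ≤ h) :
    2 * (K2 h k s t).ncard = (irrCount s t + irrInvoCount s t) * bCount (h - s) (k - t) := by
  classical
  have h0 : 0 < s := hs1
  set G' : Set (Set (Perm (Fin (h - s)))) :=
    {C | ∃ τ, invNum τ = k - t ∧ C = {σ | SIE σ τ}} with hG'
  have hrep : ∀ C' : ↥G', ∃ τ : Perm (Fin (h - s)),
      invNum τ = k - t ∧ (C' : Set (Perm (Fin (h - s)))) = {σ | SIE σ τ} := fun C' => C'.2
  set S : Finset (Set (Perm (Fin h))) := (Set.toFinite (K2 h k s t)).toFinset with hSdef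
  set Φ1 : ({ρ : Perm (Fin s) // IrredPerm ρ ∧ invNum ρ = t} × ↥G') → Set (Perm (Fin h)) :=
    fun x => {σ | SIE σ (glue hs2 x.1.1 (hrep x.2).choose)} with hΦ1
  set Φ2 : ({ρ : Perm (Fin s) // ρ * ρ = 1 ∧ IrredPerm ρ ∧ invNum ρ = t} × ↥G') →
      Set (Perm (Fin h)) :=
    fun x => {σ | SIE σ (glue hs2 x.1.1 (hrep x.2).choose)} with hΦ2
  have hΦ1S : ∀ x, Φ1 x ∈ S := by
    intro x
    rw [hSdef, Set.Finite.mem_toFinset]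
    exact ⟨hs2, x.1.1, (hrep x.2).choose, x.1.2.1, x.1.2.2, (hrep x.2).choose_spec.1, rfl⟩
  have hΦ2S : ∀ x, Φ2 x ∈ S := by
    intro x
    rw [hSdef, Set.Finite.mem_toFinset]
    exact ⟨hs2, x.1.1, (hrep x.2).choose, x.1.2.2.1, x.1.2.2.2, (hrep x.2).choose_spec.1, rfl⟩
  have hc1 := card_eq_sum_fibers Φ1 S hΦ1S
  have hc2 := card_eq_sum_fibers Φ2 S hΦ2S
  have hfib : ∀ C ∈ S,
      Nat.card {x // Φ1 x = C} + Nat.card {x // Φ2 x = C} = 2 := by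
    intro C hC
    rw [hSdef, Set.Finite.mem_toFinset] at hC
    obtain ⟨hsC, ρ₀, τ₀, h₀irr, h₀t, hτ₀, hCeq⟩ := hC
    have hiff1 : ∀ x, Φ1 x = C ↔
        ((x.1.1 = ρ₀ ∨ x.1.1 = ρ₀⁻¹) ∧
          (x.2 : Set (Perm (Fin (h - s)))) = {σ | SIE σ τ₀}) := by
      intro x
      rw [hCeq, hΦ1]
      constructor
      · intro hEq
        have hSIE := sieClass_eq_iff.mp hEq
        have hg := (sie_glue_iff hs2 ρ₀ x.1.1 τ₀ ((hrep x.2).choose) h0 h₀irr).mp hSIE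
        exact ⟨hg.1, by rw [(hrep x.2).choose_spec.2]; exact sieClass_eq_iff.mpr hg.2⟩
      · rintro ⟨hρ, hC'⟩
        apply sieClass_eq_iff.mpr
        apply (sie_glue_iff hs2 ρ₀ x.1.1 τ₀ ((hrep x.2).choose) h0 h₀irr).mpr
        refine ⟨hρ, sieClass_eq_iff.mp ?_⟩
        rw [← (hrep x.2).choose_spec.2]
        exact hC'
    have hiff2 : ∀ x, Φ2 x = C ↔
        ((x.1.1 = ρ₀ ∨ x.1.1 = ρ₀⁻¹) ∧
          (x.2 : Set (Perm (Fin (h - s)))) = {σ | SIE σ τ₀}) := by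
      intro x
      rw [hCeq, hΦ2]
      constructor
      · intro hEq
        have hSIE := sieClass_eq_iff.mp hEq
        have hg := (sie_glue_iff hs2 ρ₀ x.1.1 τ₀ ((hrep x.2).choose) h0 h₀irr).mp hSIE
        exact ⟨hg.1, by rw [(hrep x.2).choose_spec.2]; exact sieClass_eq_iff.mpr hg.2⟩
      · rintro ⟨hρ, hC'⟩
        apply sieClass_eq_iff.mpr
        apply (sie_glue_iff hs2 ρ₀ x.1.1 τ₀ ((hrep x.2).choose) h0 h₀irr).mpr
        refine ⟨hρ, sieClass_eq_iff.mp ?_⟩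
        rw [← (hrep x.2).choose_spec.2]
        exact hC'
    have hmem0 : ({σ | SIE σ τ₀} : Set (Perm (Fin (h - s)))) ∈ G' := ⟨τ₀, hτ₀, rfl⟩
    have e1 : {x // Φ1 x = C} ≃ {ρv : Perm (Fin s) // ρv = ρ₀ ∨ ρv = ρ₀⁻¹} :=
      { toFun := fun x => ⟨x.1.1.1, ((hiff1 x.1).mp x.2).1⟩
        invFun := fun r => ⟨(⟨r.1, by
            rcases r.2 with he | he
            · rw [he]; exact ⟨h₀irr, h₀t⟩
            · rw [he]; exact ⟨irredPerm_inv h₀irr, (invNum_inv ρ₀).trans h₀t⟩⟩,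
            ⟨{σ | SIE σ τ₀}, hmem0⟩), (hiff1 _).mpr ⟨r.2, rfl⟩⟩
        left_inv := fun x => by
          apply Subtype.ext
          apply Prod.ext
          · exact Subtype.ext rfl
          · exact Subtype.ext ((hiff1 x.1).mp x.2).2.symm
        right_inv := fun r => rfl }
    have e2 : {x // Φ2 x = C} ≃
        {ρv : Perm (Fin s) // (ρv = ρ₀ ∨ ρv = ρ₀⁻¹) ∧ ρv * ρv = 1} :=
      { toFun := fun x => ⟨x.1.1.1, ⟨((hiff2 x.1).mp x.2).1, x.1.1.2.1⟩⟩
        invFun := fun r => ⟨(⟨r.1, by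
            rcases r.2.1 with he | he
            · rw [he]; exact ⟨by rw [← he]; exact r.2.2, h₀irr, h₀t⟩
            · rw [he]; exact ⟨by rw [← he]; exact r.2.2, irredPerm_inv h₀irr,
                (invNum_inv ρ₀).trans h₀t⟩⟩,
            ⟨{σ | SIE σ τ₀}, hmem0⟩), (hiff2 _).mpr ⟨r.2.1, rfl⟩⟩
        left_inv := fun x => by
          apply Subtype.ext
          apply Prod.ext
          · exact Subtype.ext rfl
          · exact Subtype.ext ((hiff2 x.1).mp x.2).2.symm
        right_inv := fun r => rfl }
    rw [Nat.card_congr e1, Nat.card_congr e2]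
    by_cases hinv : ρ₀⁻¹ = ρ₀
    · rw [hinv]
      rw [card_subtype_pair_self]
      have e3 : {ρv : Perm (Fin s) // (ρv = ρ₀ ∨ ρv = ρ₀) ∧ ρv * ρv = 1} ≃
          {ρv : Perm (Fin s) // ρv = ρ₀ ∨ ρv = ρ₀} :=
        Equiv.subtypeEquivRight (fun x => by
          constructor
          · exact fun hx => hx.1
          · rintro (rfl | rfl) <;>
              exact ⟨Or.inl rfl, mul_eq_one_iff_inv_eq.mpr hinv⟩)
      rw [Nat.card_congr e3, card_subtype_pair_self]
    · rw [card_subtype_pair_ne hinv]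
      haveI e4 : IsEmpty {ρv : Perm (Fin s) // (ρv = ρ₀ ∨ ρv = ρ₀⁻¹) ∧ ρv * ρv = 1} := by
        constructor
        rintro ⟨ρv, (rfl | rfl), hvv⟩
        · exact hinv (mul_eq_one_iff_inv_eq.mp hvv)
        · have := mul_eq_one_iff_inv_eq.mp hvv
          rw [inv_inv] at this
          exact hinv this.symm
      rw [Nat.card_of_isEmpty]
  have hsum : Nat.card ({ρ : Perm (Fin s) // IrredPerm ρ ∧ invNum ρ = t} × ↥G') +
      Nat.card ({ρ : Perm (Fin s) // ρ * ρ = 1 ∧ IrredPerm ρ ∧ invNum ρ = t} × ↥G') =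
      2 * S.card := by
    rw [hc1, hc2, ← Finset.sum_add_distrib, Finset.sum_congr rfl hfib, Finset.sum_const,
      smul_eq_mul, mul_comm]
  have hbc : Nat.card (↥G') = bCount (h - s) (k - t) := by
    rw [Nat.card_coe_set_eq]
    rfl
  have hSK : S.card = (K2 h k s t).ncard := (Set.ncard_eq_toFinset_card _ _).symm
  rw [← hSK, ← hsum, Nat.card_prod, Nat.card_prod, hbc]
  have h1 : Nat.card {ρ : Perm (Fin s) // IrredPerm ρ ∧ invNum ρ = t} = irrCount s t := rfl
  have h2 : Nat.card {ρ : Perm (Fin s) // ρ * ρ = 1 ∧ IrredPerm ρ ∧ invNum ρ = t} =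
      irrInvoCount s t := rfl
  rw [h1, h2, add_mul]

/-- For every `h ≥ 1` and `k ≥ 0`, twice the number `B(h,k)` of "sectionally inverse or
equal" classes of permutations of `{1,…,h}` with `k` inversions equals
`Σ_{s=1}^{h} Σ_{t=0}^{k} (I(s,t) + IT(s,t)) · B(h−s, k−t)`. -/
theorem two_mul_bCount_eq (h k : ℕ) (hh : 1 ≤ h) :
    2 * bCount h k =
      ∑ s ∈ Finset.Icc 1 h, ∑ t ∈ Finset.range (k + 1),
        (irrCount s t + irrInvoCount s t) * bCount (h - s) (k - t) := by
  classical
  have hcov : {C : Set (Equiv.Perm (Fin h)) | ∃ π, invNum π = k ∧ C = {σ | SIE σ π}} =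
      ⋃ p ∈ Finset.Icc 1 h ×ˢ Finset.range (k + 1), K2 h k p.1 p.2 := by
    ext C
    simp only [Set.mem_setOf_eq, Set.mem_iUnion, Finset.mem_product, Finset.mem_Icc,
      Finset.mem_range]
    constructor
    · rintro ⟨π, hπk, rfl⟩
      have hex : ∃ u, 0 < u ∧ ClosedAt π u := ⟨h, hh, closedAt_of_le π (le_refl h)⟩
      have hspec := Nat.find_spec hex
      have hsh : Nat.find hex ≤ h := Nat.find_min' hex ⟨hh, closedAt_of_le π (le_refl h)⟩
      obtain ⟨ρ, τ, hglue⟩ := exists_glue hsh hspec.2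
      have hirr : IrredPerm ρ := by
        rw [irredPerm_iff']
        rintro ⟨u, hu0, hus, hcu⟩
        have hcπ : ClosedAt π u := by
          rw [hglue]; exact (closedAt_glue_le hsh ρ τ (le_of_lt hus)).mpr hcu
        exact Nat.find_min hex hus ⟨hu0, hcπ⟩
      have hadd : invNum ρ + invNum τ = k := by
        have hg2 : invNum (glue hsh ρ τ) = invNum π := congrArg invNum hglue.symm
        rw [invNum_glue] at hg2
        rw [hg2, hπk]
      refine ⟨(Nat.find hex, invNum ρ), ⟨⟨⟨hspec.1, hsh⟩, by omega⟩, ?_⟩⟩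
      exact ⟨hsh, ρ, τ, hirr, rfl, by omega,
        congrArg (fun π₀ => {σ | SIE σ π₀}) hglue⟩
    · rintro ⟨⟨s, t⟩, ⟨⟨⟨hs1, hsh⟩, htk⟩, hsC, ρ, τ, hρirr, hρt, hτ, rfl⟩⟩
      refine ⟨glue hsC ρ τ, ?_, rfl⟩
      rw [invNum_glue]
      omega
  have hdisj : ∀ p ∈ Finset.Icc 1 h ×ˢ Finset.range (k + 1),
      ∀ q ∈ Finset.Icc 1 h ×ˢ Finset.range (k + 1), p ≠ q →
      Disjoint (K2 h k p.1 p.2) (K2 h k q.1 q.2) := by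
    rintro ⟨a, b⟩ hp ⟨c, d⟩ hq hpq
    simp only [Finset.mem_product, Finset.mem_Icc, Finset.mem_range] at hp hq
    rw [Set.disjoint_left]
    rintro C ⟨hsp, ρ1, τ1, h1irr, h1t, hτ1, rfl⟩ ⟨hsq, ρ2, τ2, h2irr, h2t, hτ2, hCq⟩
    have hSIE := sieClass_eq_iff.mp hCq
    have hcl := sie_closedAt_iff hSIE
    have hac : a = c := by
      by_contra hne
      rcases lt_or_gt_of_ne hne with hlt | hgt
      · have c1 : ClosedAt (glue hsp ρ1 τ1) a :=
          (closedAt_glue_ge hsp ρ1 τ1 (le_refl a)).mpr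
            (by rw [Nat.sub_self]; exact closedAt_zero _)
        have c2 : ClosedAt (glue hsq ρ2 τ2) a := (hcl a).mp c1
        have := (closedAt_glue_le hsq ρ2 τ2 (le_of_lt hlt)).mp c2
        exact (irredPerm_iff'.mp h2irr) ⟨a, hp.1.1, hlt, this⟩
      · have c2 : ClosedAt (glue hsq ρ2 τ2) c :=
          (closedAt_glue_ge hsq ρ2 τ2 (le_refl c)).mpr
            (by rw [Nat.sub_self]; exact closedAt_zero _)
        have c1 : ClosedAt (glue hsp ρ1 τ1) c := (hcl c).mpr c2
        have := (closedAt_glue_le hsp ρ1 τ1 (le_of_lt hgt)).mp c1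
        exact (irredPerm_iff'.mp h1irr) ⟨c, hq.1.1, hgt, this⟩
    subst hac
    have hg := (sie_glue_iff hsq ρ2 ρ1 τ2 τ1 hp.1.1 h2irr).mp hSIE
    have h1t' : invNum ρ1 = b := h1t
    have h2t' : invNum ρ2 = d := h2t
    have hbd : b = d := by
      rcases hg.1 with he | he
      · rw [← h1t', ← h2t', he]
      · rw [← h1t', ← h2t', he, invNum_inv]
    exact hpq (by rw [hbd])
  have hstep : bCount h k = ∑ p ∈ Finset.Icc 1 h ×ˢ Finset.range (k + 1),
      (K2 h k p.1 p.2).ncard := by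
    unfold bCount
    rw [hcov]
    exact ncard_biUnion_eq _ _ hdisj
  rw [hstep, Finset.mul_sum]
  rw [Finset.sum_congr rfl (fun p hp => by
    simp only [Finset.mem_product, Finset.mem_Icc, Finset.mem_range] at hp
    exact key_st h k p.1 p.2 hp.1.1 hp.1.2)]
  rw [← Finset.sum_product']
end

section
/- For every h ≥ 1 and k ≥ 0, I(h,k) + Σ_{s=1}^{h−1} Σ_{t=0}^{k} I(s,t) · P(h−s, k−t) = P(h,k), where P(h,k) is the number of permutations of {1,…,h} with exactly k inversions and I(s,t) is the number of irreducible permutations of {1,…,s} with exactly t inversions. -/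
namespace IrrProof

def ClosedAt {h : ℕ} (π : Equiv.Perm (Fin h)) (u : ℕ) : Prop :=
  ∀ i : Fin h, i.val < u → (π i).val < u

lemma closedAt_compl {h : ℕ} {π : Equiv.Perm (Fin h)} {s : ℕ} (hc : ClosedAt π s) :
    ∀ i : Fin h, s ≤ i.val → s ≤ (π i).val := by
  classical
  intro i hi
  by_contra hlt
  push_neg at hlt
  set S : Finset (Fin h) := Finset.univ.filter (fun j => j.val < s) with hS
  have himg : S.image π = S := by
    apply Finset.eq_of_subset_of_card_le
    · intro j hj
      simp only [hS, Finset.mem_image, Finset.mem_filter, Finset.mem_univ, true_and] at hj ⊢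
      obtain ⟨a, ha, rfl⟩ := hj
      exact hc a ha
    · rw [Finset.card_image_of_injective _ π.injective]
  have hmem : π i ∈ S := by simp [hS, hlt]
  rw [← himg] at hmem
  simp only [Finset.mem_image, hS, Finset.mem_filter, Finset.mem_univ, true_and] at hmem
  obtain ⟨a, ha, haeq⟩ := hmem
  have := π.injective haeq
  subst this
  omega

lemma closedAt_symm {h : ℕ} {π : Equiv.Perm (Fin h)} {s : ℕ} (hc : ClosedAt π s) :
    ClosedAt π.symm s := by
  intro j hj
  by_contra hge
  push_neg at hge
  have := closedAt_compl hc (π.symm j) hge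
  simp at this
  omega

end IrrProof

namespace IrrProof

def glue {s h : ℕ} (hs : s ≤ h) (σ : Equiv.Perm (Fin s)) (τ : Equiv.Perm (Fin (h - s))) :
    Equiv.Perm (Fin h) where
  toFun i := if hi : i.val < s
    then ⟨(σ ⟨i.val, hi⟩).val, lt_of_lt_of_le (σ _).isLt hs⟩
    else ⟨s + (τ ⟨i.val - s, by have := i.isLt; omega⟩).val,
      by have := (τ ⟨i.val - s, by have := i.isLt; omega⟩).isLt; omega⟩
  invFun i := if hi : i.val < s
    then ⟨(σ.symm ⟨i.val, hi⟩).val, lt_of_lt_of_le (σ.symm _).isLt hs⟩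
    else ⟨s + (τ.symm ⟨i.val - s, by have := i.isLt; omega⟩).val,
      by have := (τ.symm ⟨i.val - s, by have := i.isLt; omega⟩).isLt; omega⟩
  left_inv := by
    intro i
    by_cases hi : i.val < s
    · have h1 : (σ ⟨i.val, hi⟩).val < s := (σ _).isLt
      simp only [dif_pos hi, dif_pos h1]
      ext
      simp
    · have h2 : ¬ (s + (τ ⟨i.val - s, by have := i.isLt; omega⟩).val < s) := by omega
      simp only [dif_neg hi, dif_neg h2]
      ext
      simp only
      have : (⟨s + (τ ⟨i.val - s, by have := i.isLt; omega⟩).val - s, by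
          have := (τ ⟨i.val - s, by have := i.isLt; omega⟩).isLt; omega⟩ : Fin (h - s))
          = τ ⟨i.val - s, by have := i.isLt; omega⟩ := by
        ext; simp
      rw [this]
      simp
      omega
  right_inv := by
    intro i
    by_cases hi : i.val < s
    · have h1 : (σ.symm ⟨i.val, hi⟩).val < s := (σ.symm _).isLt
      simp only [dif_pos hi, dif_pos h1]
      ext
      simp
    · have h2 : ¬ (s + (τ.symm ⟨i.val - s, by have := i.isLt; omega⟩).val < s) := by omega
      simp only [dif_neg hi, dif_neg h2]
      ext
      simp only
      have : (⟨s + (τ.symm ⟨i.val - s, by have := i.isLt; omega⟩).val - s, by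
          have := (τ.symm ⟨i.val - s, by have := i.isLt; omega⟩).isLt; omega⟩ : Fin (h - s))
          = τ.symm ⟨i.val - s, by have := i.isLt; omega⟩ := by
        ext; simp
      rw [this]
      simp
      omega

lemma glue_val_lt {s h : ℕ} (hs : s ≤ h) (σ : Equiv.Perm (Fin s)) (τ : Equiv.Perm (Fin (h - s)))
    (i : Fin h) (hi : i.val < s) :
    (glue hs σ τ i).val = (σ ⟨i.val, hi⟩).val := by
  simp [glue, Equiv.coe_fn_mk, dif_pos hi]

lemma glue_val_ge {s h : ℕ} (hs : s ≤ h) (σ : Equiv.Perm (Fin s)) (τ : Equiv.Perm (Fin (h - s)))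
    (i : Fin h) (hi : s ≤ i.val) :
    (glue hs σ τ i).val = s + (τ ⟨i.val - s, by have := i.isLt; omega⟩).val := by
  have : ¬ i.val < s := by omega
  simp [glue, Equiv.coe_fn_mk, dif_neg this]

lemma glue_val_ge' {s h : ℕ} (hs : s ≤ h) (σ : Equiv.Perm (Fin s)) (τ : Equiv.Perm (Fin (h - s)))
    (i : Fin h) (hi : s ≤ i.val) (b : Fin (h - s)) (hb : i.val = s + b.val) :
    (glue hs σ τ i).val = s + (τ b).val := by
  have hb' : (⟨i.val - s, by have := i.isLt; omega⟩ : Fin (h - s)) = b := by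
    ext
    simp only [Fin.val_mk]
    omega
  rw [glue_val_ge hs σ τ i hi, hb']

end IrrProof

namespace IrrProof

open Finset

variable {s h : ℕ}

noncomputable def partialInv {h : ℕ} (π : Equiv.Perm (Fin h)) (s : ℕ) : ℕ :=
  ((Finset.univ.filter fun p : Fin h × Fin h => p.1 < p.2 ∧ π p.2 < π p.1).filter
    fun p => p.2.val < s).card

lemma partialInv_le {π : Equiv.Perm (Fin h)} {s : ℕ} : partialInv π s ≤ invNum π :=
  Finset.card_le_card (Finset.filter_subset _ _)

lemma partialInv_glue (hs : s ≤ h) (σ : Equiv.Perm (Fin s)) (τ : Equiv.Perm (Fin (h - s))) :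
    partialInv (glue hs σ τ) s = invNum σ := by
  classical
  unfold partialInv invNum
  refine Finset.card_bij'
    (fun p hp => ((⟨p.1.val, by
        simp only [mem_filter, mem_univ, true_and, Fin.lt_def] at hp; omega⟩ : Fin s),
      (⟨p.2.val, by simp only [mem_filter] at hp; exact hp.2⟩ : Fin s)))
    (fun q hq => ((⟨q.1.val, lt_of_lt_of_le q.1.isLt hs⟩ : Fin h),
      (⟨q.2.val, lt_of_lt_of_le q.2.isLt hs⟩ : Fin h)))
    ?_ ?_ ?_ ?_
  · intro p hp
    simp only [mem_filter, mem_univ, true_and, Fin.lt_def] at hp ⊢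
    obtain ⟨⟨h12, hinv⟩, h2s⟩ := hp
    have h1s : p.1.val < s := by omega
    rw [glue_val_lt hs σ τ p.2 h2s, glue_val_lt hs σ τ p.1 h1s] at hinv
    exact ⟨h12, hinv⟩
  · intro q hq
    simp only [mem_filter, mem_univ, true_and, Fin.lt_def] at hq ⊢
    obtain ⟨h12, hinv⟩ := hq
    have e2 : (glue hs σ τ ⟨q.2.val, lt_of_lt_of_le q.2.isLt hs⟩).val = (σ q.2).val := by
      rw [glue_val_lt hs σ τ _ q.2.isLt]
    have e1 : (glue hs σ τ ⟨q.1.val, lt_of_lt_of_le q.1.isLt hs⟩).val = (σ q.1).val := by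
      rw [glue_val_lt hs σ τ _ q.1.isLt]
    rw [e1, e2]
    exact ⟨⟨h12, hinv⟩, q.2.isLt⟩
  · intro p hp
    ext <;> simp
  · intro q hq
    ext <;> simp

lemma upper_card (hs : s ≤ h) (σ : Equiv.Perm (Fin s)) (τ : Equiv.Perm (Fin (h - s))) :
    ((Finset.univ.filter fun p : Fin h × Fin h =>
        p.1 < p.2 ∧ glue hs σ τ p.2 < glue hs σ τ p.1).filter
      fun p => ¬ p.2.val < s).card = invNum τ := by
  classical
  unfold invNum
  refine Finset.card_bij'
    (fun p hp => ((⟨p.1.val - s, by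
        have := p.1.isLt
        simp only [mem_filter, mem_univ, true_and, Fin.lt_def, not_lt] at hp
        -- need s ≤ p.1.val
        rcases hp with ⟨⟨h12, hinv⟩, h2s⟩
        by_contra hc
        push_neg at hc
        rw [glue_val_lt hs σ τ p.1 (by omega), glue_val_ge hs σ τ p.2 h2s] at hinv
        have := (σ ⟨p.1.val, by omega⟩).isLt
        omega⟩ : Fin (h - s)),
      (⟨p.2.val - s, by
        have := p.2.isLt
        simp only [mem_filter, mem_univ, true_and, Fin.lt_def, not_lt] at hp
        omega⟩ : Fin (h - s))))
    (fun q hq => ((⟨s + q.1.val, by have := q.1.isLt; omega⟩ : Fin h),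
      (⟨s + q.2.val, by have := q.2.isLt; omega⟩ : Fin h)))
    ?_ ?_ ?_ ?_
  · intro p hp
    simp only [mem_filter, mem_univ, true_and, Fin.lt_def, not_lt] at hp ⊢
    obtain ⟨⟨h12, hinv⟩, h2s⟩ := hp
    have h1s : s ≤ p.1.val := by
      by_contra hc
      push_neg at hc
      rw [glue_val_lt hs σ τ p.1 (by omega), glue_val_ge hs σ τ p.2 h2s] at hinv
      have := (σ ⟨p.1.val, by omega⟩).isLt
      omega
    rw [glue_val_ge hs σ τ p.1 h1s, glue_val_ge hs σ τ p.2 h2s] at hinv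
    constructor
    · omega
    · omega
  · intro q hq
    simp only [mem_filter, mem_univ, true_and, Fin.lt_def, not_lt] at hq ⊢
    obtain ⟨h12, hinv⟩ := hq
    have e1 : (glue hs σ τ ⟨s + q.1.val, by have := q.1.isLt; omega⟩).val
        = s + (τ q.1).val :=
      glue_val_ge' hs σ τ _ (Nat.le_add_right _ _) q.1 rfl
    have e2 : (glue hs σ τ ⟨s + q.2.val, by have := q.2.isLt; omega⟩).val
        = s + (τ q.2).val :=
      glue_val_ge' hs σ τ _ (Nat.le_add_right _ _) q.2 rfl
    rw [e1, e2]
    exact ⟨⟨by omega, by omega⟩, by omega⟩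
  · intro p hp
    simp only [mem_filter, mem_univ, true_and, Fin.lt_def, not_lt] at hp
    obtain ⟨⟨h12, hinv⟩, h2s⟩ := hp
    have h1s : s ≤ p.1.val := by
      by_contra hc
      push_neg at hc
      rw [glue_val_lt hs σ τ p.1 (by omega), glue_val_ge hs σ τ p.2 h2s] at hinv
      have := (σ ⟨p.1.val, by omega⟩).isLt
      omega
    have e1 : s + (p.1.val - s) = p.1.val := by omega
    have e2 : s + (p.2.val - s) = p.2.val := by omega
    refine Prod.ext ?_ ?_ <;> ext <;> simp only [Fin.val_mk] <;> omega
  · intro q hq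
    refine Prod.ext ?_ ?_ <;> ext <;> simp only [Fin.val_mk] <;> omega

lemma invNum_glue (hs : s ≤ h) (σ : Equiv.Perm (Fin s)) (τ : Equiv.Perm (Fin (h - s))) :
    invNum (glue hs σ τ) = invNum σ + invNum τ := by
  classical
  rw [← partialInv_glue hs σ τ, ← upper_card hs σ τ]
  unfold partialInv invNum
  exact (Finset.card_filter_add_card_filter_not (p := fun p : Fin h × Fin h => p.2.val < s)).symm

end IrrProof

namespace IrrProof

variable {s h : ℕ}

lemma closedAt_glue_self (hs : s ≤ h) (σ : Equiv.Perm (Fin s)) (τ : Equiv.Perm (Fin (h - s))) :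
    ClosedAt (glue hs σ τ) s := by
  intro i hi
  rw [glue_val_lt hs σ τ i hi]
  exact (σ _).isLt

lemma closedAt_glue_iff (hs : s ≤ h) (σ : Equiv.Perm (Fin s)) (τ : Equiv.Perm (Fin (h - s)))
    {u : ℕ} (hu : u ≤ s) :
    ClosedAt (glue hs σ τ) u ↔ ∀ a : Fin s, a.val < u → (σ a).val < u := by
  constructor
  · intro hcl a ha
    have := hcl ⟨a.val, lt_of_lt_of_le a.isLt hs⟩ ha
    rwa [glue_val_lt hs σ τ _ a.isLt] at this
  · intro hcl i hi
    rw [glue_val_lt hs σ τ i (by have := hu; omega)]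
    exact hcl _ hi

def lowerP (π : Equiv.Perm (Fin h)) (hs : s ≤ h) (hc : ClosedAt π s) : Equiv.Perm (Fin s) where
  toFun a := ⟨(π ⟨a.val, lt_of_lt_of_le a.isLt hs⟩).val, hc _ a.isLt⟩
  invFun a := ⟨(π.symm ⟨a.val, lt_of_lt_of_le a.isLt hs⟩).val, closedAt_symm hc _ a.isLt⟩
  left_inv := by intro a; ext; simp
  right_inv := by intro a; ext; simp

def upperP (π : Equiv.Perm (Fin h)) (hs : s ≤ h) (hc : ClosedAt π s) :
    Equiv.Perm (Fin (h - s)) where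
  toFun b := ⟨(π ⟨s + b.val, by have := b.isLt; omega⟩).val - s, by
    have h1 := closedAt_compl hc ⟨s + b.val, by have := b.isLt; omega⟩ (Nat.le_add_right _ _)
    have h2 := (π ⟨s + b.val, by have := b.isLt; omega⟩).isLt
    omega⟩
  invFun b := ⟨(π.symm ⟨s + b.val, by have := b.isLt; omega⟩).val - s, by
    have h1 := closedAt_compl (closedAt_symm hc) ⟨s + b.val, by have := b.isLt; omega⟩
      (Nat.le_add_right _ _)
    have h2 := (π.symm ⟨s + b.val, by have := b.isLt; omega⟩).isLt
    omega⟩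
  left_inv := by
    intro b
    have h1 := closedAt_compl hc ⟨s + b.val, by have := b.isLt; omega⟩ (Nat.le_add_right _ _)
    ext
    simp only [Fin.val_mk]
    have e : (⟨s + ((π ⟨s + b.val, by have := b.isLt; omega⟩).val - s), by
        have := (π ⟨s + b.val, by have := b.isLt; omega⟩).isLt; omega⟩ : Fin h)
        = π ⟨s + b.val, by have := b.isLt; omega⟩ := by
      ext; simp only [Fin.val_mk]; omega
    rw [e]
    simp
  right_inv := by
    intro b
    have h1 := closedAt_compl (closedAt_symm hc) ⟨s + b.val, by have := b.isLt; omega⟩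
      (Nat.le_add_right _ _)
    ext
    simp only [Fin.val_mk]
    have e : (⟨s + ((π.symm ⟨s + b.val, by have := b.isLt; omega⟩).val - s), by
        have := (π.symm ⟨s + b.val, by have := b.isLt; omega⟩).isLt; omega⟩ : Fin h)
        = π.symm ⟨s + b.val, by have := b.isLt; omega⟩ := by
      ext; simp only [Fin.val_mk]; omega
    rw [e]
    simp

lemma glue_lowerP_upperP (π : Equiv.Perm (Fin h)) (hs : s ≤ h) (hc : ClosedAt π s) :
    glue hs (lowerP π hs hc) (upperP π hs hc) = π := by
  ext i
  by_cases hi : i.val < s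
  · rw [glue_val_lt hs _ _ i hi]
    simp only [lowerP, Equiv.coe_fn_mk]
  · push_neg at hi
    rw [glue_val_ge hs _ _ i hi]
    simp only [upperP, Equiv.coe_fn_mk, Fin.val_mk]
    have hcompl := closedAt_compl hc i hi
    have e : (⟨s + (i.val - s), by have := i.isLt; omega⟩ : Fin h) = i := by
      ext; simp only [Fin.val_mk]; omega
    rw [e]
    omega

lemma lowerP_glue (hs : s ≤ h) (σ : Equiv.Perm (Fin s)) (τ : Equiv.Perm (Fin (h - s)))
    (hc : ClosedAt (glue hs σ τ) s) : lowerP (glue hs σ τ) hs hc = σ := by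
  ext a
  simp only [lowerP, Equiv.coe_fn_mk]
  rw [glue_val_lt hs σ τ _ a.isLt]

lemma upperP_glue (hs : s ≤ h) (σ : Equiv.Perm (Fin s)) (τ : Equiv.Perm (Fin (h - s)))
    (hc : ClosedAt (glue hs σ τ) s) : upperP (glue hs σ τ) hs hc = τ := by
  ext b
  simp only [upperP, Equiv.coe_fn_mk, Fin.val_mk]
  rw [glue_val_ge' hs σ τ _ (Nat.le_add_right _ _) b rfl]
  omega

end IrrProof

namespace IrrProof

open Finset

variable {h : ℕ}

lemma exists_closed (π : Equiv.Perm (Fin h)) (hh : 1 ≤ h) :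
    ∃ u, 0 < u ∧ u ≤ h ∧ ClosedAt π u :=
  ⟨h, hh, le_refl h, fun i _ => (π i).isLt⟩

open Classical in
noncomputable def sOf (π : Equiv.Perm (Fin h)) (hh : 1 ≤ h) : ℕ :=
  Nat.find (exists_closed π hh)

lemma sOf_spec (π : Equiv.Perm (Fin h)) (hh : 1 ≤ h) :
    0 < sOf π hh ∧ sOf π hh ≤ h ∧ ClosedAt π (sOf π hh) := by
  classical
  exact Nat.find_spec (exists_closed π hh)

lemma sOf_min (π : Equiv.Perm (Fin h)) (hh : 1 ≤ h) {u : ℕ} (h1 : 0 < u) (h2 : u < sOf π hh) :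
    ¬ ClosedAt π u := by
  classical
  intro hc
  exact Nat.find_min (exists_closed π hh) h2 ⟨h1, by have := (sOf_spec π hh).2.1; omega, hc⟩

lemma sOf_eq {π : Equiv.Perm (Fin h)} (hh : 1 ≤ h) {s : ℕ} (h1 : 0 < s) (h2 : s ≤ h)
    (hc : ClosedAt π s) (hmin : ∀ u, 0 < u → u < s → ¬ ClosedAt π u) : sOf π hh = s := by
  classical
  have hle : sOf π hh ≤ s := Nat.find_le ⟨h1, h2, hc⟩
  rcases Nat.lt_or_ge (sOf π hh) s with hlt | hge
  · exact absurd (sOf_spec π hh).2.2 (hmin _ (sOf_spec π hh).1 hlt)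
  · omega

open Classical in
lemma permCount_eq (h k : ℕ) : permCount h k
    = ((univ : Finset (Equiv.Perm (Fin h))).filter fun π => invNum π = k).card := by
  classical
  rw [permCount, Nat.card_eq_fintype_card, Fintype.card_subtype]

open Classical in
lemma irrCount_eq (h k : ℕ) : irrCount h k
    = ((univ : Finset (Equiv.Perm (Fin h))).filter fun π => IrredPerm π ∧ invNum π = k).card := by
  classical
  rw [irrCount, Nat.card_eq_fintype_card, Fintype.card_subtype]

end IrrProof

namespace IrrProof

open Finset

open Classical in
lemma fiber_card {h : ℕ} (k s t : ℕ) (hh : 1 ≤ h) (hs1 : 1 ≤ s) (hsh : s ≤ h) (htk : t ≤ k) :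
    (((univ : Finset (Equiv.Perm (Fin h))).filter fun π => invNum π = k).filter
      (fun π => sOf π hh = s ∧ partialInv π (sOf π hh) = t)).card
    = irrCount s t * permCount (h - s) (k - t) := by
  classical
  rw [irrCount_eq, permCount_eq, ← Finset.card_product]
  refine (Finset.card_bij (fun στ _ => glue hsh στ.1 στ.2) ?_ ?_ ?_).symm
  · -- maps into the fiber
    rintro ⟨σ, τ⟩ hστ
    simp only [Finset.mem_product, Finset.mem_filter, Finset.mem_univ, true_and] at hστ ⊢
    obtain ⟨⟨hirr, hinvσ⟩, hinvτ⟩ := hστ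
    have hsof : sOf (glue hsh σ τ) hh = s := by
      refine sOf_eq hh hs1 hsh (closedAt_glue_self hsh σ τ) ?_
      intro u hu0 hus hcl
      exact hirr ⟨u, hu0, hus, (closedAt_glue_iff hsh σ τ (le_of_lt hus)).1 hcl⟩
    refine ⟨?_, hsof, ?_⟩
    · rw [invNum_glue hsh σ τ, hinvσ, hinvτ]
      omega
    · rw [hsof, partialInv_glue hsh σ τ, hinvσ]
  · -- injective
    rintro ⟨σ1, τ1⟩ h1 ⟨σ2, τ2⟩ h2 heq
    have happ := Equiv.ext_iff.mp heq
    have eσ : σ1 = σ2 := by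
      ext a
      have := congrArg Fin.val (happ ⟨a.val, lt_of_lt_of_le a.isLt hsh⟩)
      rwa [glue_val_lt hsh σ1 τ1 _ a.isLt, glue_val_lt hsh σ2 τ2 _ a.isLt] at this
    have eτ : τ1 = τ2 := by
      ext b
      have := congrArg Fin.val (happ ⟨s + b.val, by have := b.isLt; omega⟩)
      rw [glue_val_ge' hsh σ1 τ1 _ (Nat.le_add_right _ _) b rfl,
        glue_val_ge' hsh σ2 τ2 _ (Nat.le_add_right _ _) b rfl] at this
      omega
    simp [eσ, eτ]
  · -- surjective
    intro π hπ
    simp only [Finset.mem_filter, Finset.mem_univ, true_and] at hπ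
    obtain ⟨hk, hsof, ht⟩ := hπ
    rw [hsof] at ht
    have hc : ClosedAt π s := by
      have := (sOf_spec π hh).2.2
      rwa [hsof] at this
    refine ⟨(lowerP π hsh hc, upperP π hsh hc), ?_, glue_lowerP_upperP π hsh hc⟩
    simp only [Finset.mem_product, Finset.mem_filter, Finset.mem_univ, true_and]
    have hglue : glue hsh (lowerP π hsh hc) (upperP π hsh hc) = π :=
      glue_lowerP_upperP π hsh hc
    have hinvσ : invNum (lowerP π hsh hc) = t := by
      have := partialInv_glue hsh (lowerP π hsh hc) (upperP π hsh hc)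
      rw [hglue, ht] at this
      exact this.symm
    refine ⟨⟨?_, hinvσ⟩, ?_⟩
    · rintro ⟨u, hu0, hus, hcl⟩
      have : ClosedAt π u := by
        rw [← hglue]
        exact (closedAt_glue_iff hsh _ _ (le_of_lt hus)).2 hcl
      exact sOf_min π hh hu0 (by omega) this
    · have := invNum_glue hsh (lowerP π hsh hc) (upperP π hsh hc)
      rw [hglue, hk, hinvσ] at this
      omega

end IrrProof

namespace IrrProof

lemma invNum_zero_of (π : Equiv.Perm (Fin 0)) : invNum π = 0 := by
  simp [invNum]

open Classical in
lemma permCount_zero (m : ℕ) : permCount 0 m = if m = 0 then 1 else 0 := by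
  classical
  rw [permCount_eq]
  split_ifs with hm
  · subst hm
    rw [Finset.filter_true_of_mem (fun π _ => invNum_zero_of π), Finset.card_univ]
    simp
  · rw [Finset.filter_false_of_mem, Finset.card_empty]
    intro π _
    rw [invNum_zero_of π]
    omega

open Classical in
lemma assembled (h k : ℕ) (hh : 1 ≤ h) :
    irrCount h k + ∑ s ∈ Finset.Icc 1 (h - 1), ∑ t ∈ Finset.range (k + 1),
      irrCount s t * permCount (h - s) (k - t) = permCount h k := by
  classical
  rw [permCount_eq]
  rw [Finset.card_eq_sum_card_fiberwise
    (f := fun π => (sOf π hh, partialInv π (sOf π hh)))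
    (t := Finset.Icc 1 h ×ˢ Finset.range (k + 1)) ?hf]
  case hf =>
    intro π hπ
    simp only [Finset.mem_coe, Finset.mem_filter, Finset.mem_univ, true_and] at hπ
    simp only [Finset.mem_coe, Finset.mem_product, Finset.mem_Icc, Finset.mem_range]
    refine ⟨⟨(sOf_spec π hh).1, (sOf_spec π hh).2.1⟩, ?_⟩
    have := partialInv_le (π := π) (s := sOf π hh)
    omega
  rw [Finset.sum_product]
  have hstep : ∀ s ∈ Finset.Icc 1 h, ∀ t ∈ Finset.range (k + 1),
      ((Finset.univ.filter fun π : Equiv.Perm (Fin h) => invNum π = k).filter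
        (fun π => (sOf π hh, partialInv π (sOf π hh)) = (s, t))).card
      = irrCount s t * permCount (h - s) (k - t) := by
    intro s hs t ht
    simp only [Finset.mem_Icc] at hs
    simp only [Finset.mem_range] at ht
    rw [← fiber_card k s t hh hs.1 hs.2 (by omega)]
    congr 1
    apply Finset.filter_congr
    intro π _
    simp [Prod.ext_iff]
  rw [Finset.sum_congr rfl (fun s hs => Finset.sum_congr rfl (fun t ht => hstep s hs t ht))]
  have hicc : Finset.Icc 1 h = insert h (Finset.Icc 1 (h - 1)) := by
    ext x
    simp only [Finset.mem_Icc, Finset.mem_insert]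
    omega
  rw [hicc, Finset.sum_insert (by simp only [Finset.mem_Icc]; omega)]
  have hlast : ∑ t ∈ Finset.range (k + 1), irrCount h t * permCount (h - h) (k - t)
      = irrCount h k := by
    rw [Finset.sum_eq_single k]
    · rw [Nat.sub_self, Nat.sub_self, permCount_zero]
      simp
    · intro t ht hne
      simp only [Finset.mem_range] at ht
      rw [Nat.sub_self, permCount_zero, if_neg (by omega), mul_zero]
    · intro hk'
      exact absurd (Finset.self_mem_range_succ k) hk'
  rw [hlast]

end IrrProof



/-- For every `h ≥ 1` and `k ≥ 0`,
`I(h,k) + Σ_{s=1}^{h−1} Σ_{t=0}^{k} I(s,t) · P(h−s, k−t) = P(h,k)`. -/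
theorem irrCount_recursion (h k : ℕ) (hh : 1 ≤ h) :
    irrCount h k +
      ∑ s ∈ Finset.Icc 1 (h - 1), ∑ t ∈ Finset.range (k + 1),
        irrCount s t * permCount (h - s) (k - t) = permCount h k := by
  exact IrrProof.assembled h k hh
end

section
/- For every h ≥ 2 and k ≥ 0, T(h,k) = T(h−1,k) + Σ_{s=2}^{h} T(h−2, k−(2s−3)), where T(h,k) is the number of involutions of {1,…,h} with exactly k inversions and a summand T(h−2, k−(2s−3)) is interpreted as 0 whenever 2s−3 > k. -/
namespace InvoRec

open Equiv Finset

/-! ### Extension fixing the last element -/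

/-- Extend a permutation of `Fin m` to `Fin (m+1)` fixing the last element. -/
def extLast {m : ℕ} (π : Equiv.Perm (Fin m)) : Equiv.Perm (Fin (m + 1)) :=
  (Equiv.permCongr finSuccEquivLast.symm) (Equiv.optionCongr π)

lemma extLast_castSucc {m : ℕ} (π : Equiv.Perm (Fin m)) (i : Fin m) :
    extLast π (Fin.castSucc i) = Fin.castSucc (π i) := by
  simp [extLast, Equiv.permCongr_apply]

lemma extLast_last {m : ℕ} (π : Equiv.Perm (Fin m)) :
    extLast π (Fin.last m) = Fin.last m := by
  simp [extLast, Equiv.permCongr_apply]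

lemma extLast_injective {m : ℕ} : Function.Injective (extLast (m := m)) := by
  intro π π' h
  refine Equiv.ext fun i => ?_
  have := congrArg (fun σ : Equiv.Perm (Fin (m+1)) => σ (Fin.castSucc i)) h
  simpa [extLast_castSucc, Fin.castSucc_inj] using this

lemma extLast_invol_iff {m : ℕ} (π : Equiv.Perm (Fin m)) :
    extLast π * extLast π = 1 ↔ π * π = 1 := by
  constructor
  · intro H
    refine Equiv.ext fun i => ?_
    have := Equiv.ext_iff.1 H (Fin.castSucc i)
    simp only [Equiv.Perm.mul_apply, extLast_castSucc, Equiv.Perm.one_apply] at this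
    simpa [Equiv.Perm.mul_apply, Fin.castSucc_inj] using this
  · intro H
    refine Equiv.ext fun x => ?_
    rcases eq_or_ne x (Fin.last m) with rfl | hx
    · simp [Equiv.Perm.mul_apply, extLast_last]
    · obtain ⟨y, rfl⟩ := Fin.exists_castSucc_eq.2 hx
      have := Equiv.ext_iff.1 H y
      simp only [Equiv.Perm.mul_apply, Equiv.Perm.one_apply] at this ⊢
      rw [extLast_castSucc, extLast_castSucc, this]

lemma invNum_extLast {m : ℕ} (π : Equiv.Perm (Fin m)) :
    invNum (extLast π) = invNum π := by
  classical
  unfold invNum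
  symm
  apply Finset.card_bij
    (fun (p : Fin m × Fin m) _ => ((Fin.castSucc p.1, Fin.castSucc p.2) : Fin (m+1) × Fin (m+1)))
  · intro p hp
    simp only [mem_filter, mem_univ, true_and] at hp ⊢
    simpa [extLast_castSucc, Fin.castSucc_lt_castSucc_iff] using hp
  · intro p hp q hq h
    simp only [Prod.mk.injEq, Fin.castSucc_inj] at h
    exact Prod.ext h.1 h.2
  · intro q hq
    simp only [mem_filter, mem_univ, true_and] at hq
    have h2 : q.2 ≠ Fin.last m := by
      intro h
      rw [h, extLast_last] at hq
      exact absurd hq.2 (Fin.not_lt.2 (Fin.le_last _))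
    obtain ⟨b, hb⟩ := Fin.exists_castSucc_eq.2 h2
    have h1 : q.1 ≠ Fin.last m := Fin.ne_last_of_lt hq.1
    obtain ⟨a, ha⟩ := Fin.exists_castSucc_eq.2 h1
    refine ⟨(a, b), ?_, by simp [ha, hb]⟩
    simp only [mem_filter, mem_univ, true_and]
    rw [← ha, ← hb] at hq
    constructor
    · exact Fin.castSucc_lt_castSucc_iff.1 hq.1
    · have := hq.2
      rw [extLast_castSucc, extLast_castSucc, Fin.castSucc_lt_castSucc_iff] at this
      exact this

lemma exists_extLast {m : ℕ} (σ : Equiv.Perm (Fin (m+1))) (h2 : σ * σ = 1)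
    (hl : σ (Fin.last m) = Fin.last m) : ∃ π : Equiv.Perm (Fin m), extLast π = σ := by
  classical
  have hinv : ∀ x, σ (σ x) = x := fun x => Equiv.ext_iff.1 h2 x
  have key : ∀ i : Fin m, ∃ i', σ (Fin.castSucc i) = Fin.castSucc i' := by
    intro i
    have : σ (Fin.castSucc i) ≠ Fin.last m := by
      intro h
      have := σ.injective (h.trans hl.symm)
      exact absurd this (by simp [Fin.ext_iff]; omega)
    obtain ⟨y, hy⟩ := Fin.exists_castSucc_eq.2 this
    exact ⟨y, hy.symm⟩
  choose f hf using key
  have hff : ∀ i, f (f i) = i := by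
    intro i
    have : Fin.castSucc (f (f i)) = Fin.castSucc i := by
      rw [← hf, ← hf, hinv]
    exact Fin.castSucc_inj.1 this
  refine ⟨⟨f, f, fun i => hff i, fun i => hff i⟩, ?_⟩
  refine Equiv.ext fun x => ?_
  rcases eq_or_ne x (Fin.last m) with rfl | hx
  · rw [extLast_last, hl]
  · obtain ⟨y, rfl⟩ := Fin.exists_castSucc_eq.2 hx
    rw [extLast_castSucc, hf]
    rfl

end InvoRec

namespace InvoRec

open Equiv Finset

variable {n : ℕ}

/-! ### The two-cycle extension -/

/-- Order embedding of `Fin n` into `Fin (n+2)` missing `j.castSucc` and the last element. -/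
def emb (j : Fin (n + 1)) (i : Fin n) : Fin (n + 2) := Fin.castSucc (j.succAbove i)

lemma emb_injective (j : Fin (n + 1)) : Function.Injective (emb j) := fun a b h => by
  have := Fin.castSucc_inj.1 h
  exact j.succAbove_right_injective this

lemma emb_lt_emb_iff {j : Fin (n + 1)} {a b : Fin n} : emb j a < emb j b ↔ a < b := by
  rw [emb, emb, Fin.castSucc_lt_castSucc_iff, Fin.succAbove_lt_succAbove_iff]

lemma emb_lt_last (j : Fin (n + 1)) (i : Fin n) : emb j i < Fin.last (n + 1) :=
  Fin.castSucc_lt_last _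

lemma emb_ne_last (j : Fin (n + 1)) (i : Fin n) : emb j i ≠ Fin.last (n + 1) :=
  Fin.ne_of_lt (emb_lt_last j i)

lemma emb_ne_castSucc (j : Fin (n + 1)) (i : Fin n) : emb j i ≠ Fin.castSucc j := by
  simpa [emb, Fin.castSucc_inj] using j.succAbove_ne i

lemma castSucc_lt_emb_iff {j : Fin (n + 1)} {i : Fin n} :
    Fin.castSucc j < emb j i ↔ (j : ℕ) ≤ (i : ℕ) := by
  rw [emb, Fin.castSucc_lt_castSucc_iff, Fin.lt_succAbove_iff_le_castSucc]
  exact Iff.rfl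

/-- Case analysis for `Fin (n+2)` relative to `emb j`. -/
lemma fin_cases_emb (j : Fin (n + 1)) (x : Fin (n + 2)) :
    x = Fin.last (n + 1) ∨ x = Fin.castSucc j ∨ ∃ i, x = emb j i := by
  rcases eq_or_ne x (Fin.last (n + 1)) with h | h
  · exact Or.inl h
  obtain ⟨y, rfl⟩ := Fin.exists_castSucc_eq.2 h
  rcases eq_or_ne y j with rfl | hy
  · exact Or.inr (Or.inl rfl)
  · obtain ⟨i, hi⟩ := Fin.exists_succAbove_eq hy
    exact Or.inr (Or.inr ⟨i, by rw [emb, hi]⟩)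

/-- The auxiliary equivalence. -/
def gEquiv (j : Fin (n + 1)) : Fin (n + 2) ≃ Option (Option (Fin n)) :=
  finSuccEquivLast.trans (Equiv.optionCongr (finSuccEquiv' j))

@[simp] lemma gEquiv_last (j : Fin (n + 1)) : gEquiv j (Fin.last (n + 1)) = none := by
  simp [gEquiv]

@[simp] lemma gEquiv_castSucc (j : Fin (n + 1)) : gEquiv j (Fin.castSucc j) = some none := by
  simp [gEquiv]

@[simp] lemma gEquiv_emb (j : Fin (n + 1)) (i : Fin n) : gEquiv j (emb j i) = some (some i) := by
  simp [gEquiv, emb]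

/-- The involution candidate built from `τ` and the two-cycle `(j.castSucc, last)`. -/
def phi (j : Fin (n + 1)) (τ : Equiv.Perm (Fin n)) : Equiv.Perm (Fin (n + 2)) :=
  (Equiv.permCongr (gEquiv j).symm)
    (Equiv.swap (none : Option (Option (Fin n))) (some none) *
      Equiv.optionCongr (Equiv.optionCongr τ))

lemma phi_apply (j : Fin (n + 1)) (τ : Equiv.Perm (Fin n)) (x : Fin (n + 2)) :
    phi j τ x = (gEquiv j).symm
      (Equiv.swap (none : Option (Option (Fin n))) (some none)
        (Equiv.optionCongr (Equiv.optionCongr τ) (gEquiv j x))) := by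
  simp [phi, Equiv.permCongr_apply, Equiv.Perm.mul_apply]

@[simp] lemma phi_last (j : Fin (n + 1)) (τ : Equiv.Perm (Fin n)) :
    phi j τ (Fin.last (n + 1)) = Fin.castSucc j := by
  rw [phi_apply, gEquiv_last]
  simp only [Equiv.optionCongr_apply, Option.map_none]
  rw [Equiv.swap_apply_left, ← gEquiv_castSucc j, Equiv.symm_apply_apply]

@[simp] lemma phi_castSucc (j : Fin (n + 1)) (τ : Equiv.Perm (Fin n)) :
    phi j τ (Fin.castSucc j) = Fin.last (n + 1) := by
  rw [phi_apply, gEquiv_castSucc]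
  simp only [Equiv.optionCongr_apply, Option.map_some, Option.map_none]
  rw [Equiv.swap_apply_right, ← gEquiv_last j, Equiv.symm_apply_apply]

@[simp] lemma phi_emb (j : Fin (n + 1)) (τ : Equiv.Perm (Fin n)) (i : Fin n) :
    phi j τ (emb j i) = emb j (τ i) := by
  rw [phi_apply, gEquiv_emb]
  simp only [Equiv.optionCongr_apply, Option.map_some]
  rw [Equiv.swap_apply_of_ne_of_ne (by simp) (by simp), ← gEquiv_emb j (τ i),
    Equiv.symm_apply_apply]

lemma phi_injective (j : Fin (n + 1)) : Function.Injective (phi j) := by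
  intro τ τ' h
  refine Equiv.ext fun i => ?_
  have := congrArg (fun σ : Equiv.Perm (Fin (n+2)) => σ (emb j i)) h
  simp only [phi_emb] at this
  exact emb_injective j this

lemma phi_invol_iff (j : Fin (n + 1)) (τ : Equiv.Perm (Fin n)) :
    phi j τ * phi j τ = 1 ↔ τ * τ = 1 := by
  constructor
  · intro H
    refine Equiv.ext fun i => ?_
    have := Equiv.ext_iff.1 H (emb j i)
    simp only [Equiv.Perm.mul_apply, phi_emb, Equiv.Perm.one_apply] at this
    simpa [Equiv.Perm.mul_apply] using emb_injective j this
  · intro H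
    refine Equiv.ext fun x => ?_
    rcases fin_cases_emb j x with rfl | rfl | ⟨i, rfl⟩
    · simp [Equiv.Perm.mul_apply]
    · simp [Equiv.Perm.mul_apply]
    · have := Equiv.ext_iff.1 H i
      simp only [Equiv.Perm.mul_apply, Equiv.Perm.one_apply] at this ⊢
      rw [phi_emb, phi_emb, this]

lemma exists_phi (j : Fin (n + 1)) (σ : Equiv.Perm (Fin (n + 2))) (h2 : σ * σ = 1)
    (hl : σ (Fin.last (n + 1)) = Fin.castSucc j) : ∃ τ : Equiv.Perm (Fin n), phi j τ = σ := by
  classical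
  have hinv : ∀ x, σ (σ x) = x := fun x => Equiv.ext_iff.1 h2 x
  have hc : σ (Fin.castSucc j) = Fin.last (n + 1) := by
    conv_lhs => rw [← hl]
    exact hinv _
  have key : ∀ i : Fin n, ∃ i', σ (emb j i) = emb j i' := by
    intro i
    rcases fin_cases_emb j (σ (emb j i)) with h | h | ⟨i', h⟩
    · exact absurd (σ.injective (h.trans hc.symm)) (emb_ne_castSucc j i)
    · exact absurd (σ.injective (h.trans hl.symm)) (emb_ne_last j i)
    · exact ⟨i', h⟩
  choose f hf using key
  have hff : ∀ i, f (f i) = i := by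
    intro i
    apply emb_injective j
    rw [← hf, ← hf, hinv]
  refine ⟨⟨f, f, fun i => hff i, fun i => hff i⟩, ?_⟩
  refine Equiv.ext fun x => ?_
  rcases fin_cases_emb j x with rfl | rfl | ⟨i, rfl⟩
  · rw [phi_last, hl]
  · rw [phi_castSucc, hc]
  · rw [phi_emb, hf]
    rfl

/-! ### Counting lemmas -/

lemma card_filter_perm_comp {α : Type*} [Fintype α] [DecidableEq α] (τ : Equiv.Perm α)
    (P : α → Prop) [DecidablePred P] :
    (univ.filter fun i => P (τ i)).card = (univ.filter P).card := by
  apply Finset.card_bij (fun i _ => τ i)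
  · intro a ha
    simp only [mem_filter, mem_univ, true_and] at ha ⊢
    exact ha
  · intro a _ b _ h
    exact τ.injective h
  · intro b hb
    simp only [mem_filter, mem_univ, true_and] at hb
    exact ⟨τ⁻¹ b, by simp [hb], by simp⟩

lemma card_filter_le_val (n m : ℕ) :
    (univ.filter fun i : Fin n => m ≤ (i : ℕ)).card = n - m := by
  rw [← Nat.card_Ico m n]
  apply Finset.card_bij (fun (i : Fin n) _ => (i : ℕ))
  · intro a ha
    simp only [mem_filter, mem_univ, true_and] at ha
    simp [Finset.mem_Ico, ha, a.isLt]
  · intro a _ b _ h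
    exact Fin.ext h
  · intro b hb
    simp only [Finset.mem_Ico] at hb
    exact ⟨⟨b, hb.2⟩, by simp [hb.1], rfl⟩

lemma invNum_phi (j : Fin (n + 1)) (τ : Equiv.Perm (Fin n)) :
    invNum (phi j τ) = invNum τ + (2 * (n - (j : ℕ)) + 1) := by
  classical
  set σ := phi j τ with hσdef
  set c := Fin.castSucc j with hc
  set L := Fin.last (n + 1) with hL
  have hσL : σ L = c := phi_last j τ
  have hσc : σ c = L := phi_castSucc j τ
  have hσe : ∀ i, σ (emb j i) = emb j (τ i) := phi_emb j τ
  have hne_last : ∀ q : Fin (n + 2), σ q = L ↔ q = c := by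
    intro q
    rw [← hσc]
    exact σ.injective.eq_iff
  show (univ.filter fun p : Fin (n+2) × Fin (n+2) => p.1 < p.2 ∧ σ p.2 < σ p.1).card = _
  set S := univ.filter fun p : Fin (n+2) × Fin (n+2) => p.1 < p.2 ∧ σ p.2 < σ p.1 with hS
  have hsplit1 : (S.filter fun p => p.1 = c).card + (S.filter fun p => ¬ p.1 = c).card
      = S.card := Finset.card_filter_add_card_filter_not _
  have hsplit2 : ((S.filter fun p => ¬ p.1 = c).filter fun p => p.2 = L).card +
      ((S.filter fun p => ¬ p.1 = c).filter fun p => ¬ p.2 = L).card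
      = (S.filter fun p => ¬ p.1 = c).card := Finset.card_filter_add_card_filter_not _
  -- first part: pairs (c, q) with c < q; count = n + 1 - j
  have h1 : (S.filter fun p => p.1 = c).card = n + 1 - (j : ℕ) := by
    have : (S.filter fun p => p.1 = c).card = (Finset.Ioi c).card := by
      symm
      apply Finset.card_bij (fun q _ => ((c, q) : Fin (n+2) × Fin (n+2)))
      · intro q hq
        rw [Finset.mem_Ioi] at hq
        simp only [hS, mem_filter, mem_univ, true_and]
        refine ⟨⟨hq, ?_⟩, trivial⟩
        rw [hσc]
        have hql : σ q ≠ L := fun hEq => (ne_of_gt hq) ((hne_last q).1 hEq)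
        exact Fin.lt_last_iff_ne_last.2 hql
      · intro a _ b _ h
        exact (Prod.mk.injEq _ _ _ _ ▸ h).2
      · intro p hp
        simp only [hS, mem_filter, mem_univ, true_and] at hp
        obtain ⟨⟨hlt, _⟩, h1⟩ := hp
        exact ⟨p.2, Finset.mem_Ioi.2 (h1 ▸ hlt), by rw [← h1]⟩
    rw [this, Fin.card_Ioi]
    simp [hc]
  -- second part: pairs (emb i, L); count = n - j
  have h2 : ((S.filter fun p => ¬ p.1 = c).filter fun p => p.2 = L).card = n - (j : ℕ) := by
    have e1 : ((S.filter fun p => ¬ p.1 = c).filter fun p => p.2 = L).card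
        = (univ.filter fun i : Fin n => (j : ℕ) ≤ ((τ i) : ℕ)).card := by
      symm
      apply Finset.card_bij (fun i _ => ((emb j i, L) : Fin (n+2) × Fin (n+2)))
      · intro i hi
        simp only [mem_filter, mem_univ, true_and] at hi
        simp only [hS, mem_filter, mem_univ, true_and]
        refine ⟨⟨⟨emb_lt_last j i, ?_⟩, emb_ne_castSucc j i⟩, trivial⟩
        rw [hσL, hσe, hc]
        exact castSucc_lt_emb_iff.2 hi
      · intro a _ b _ h
        exact emb_injective j (Prod.mk.injEq _ _ _ _ ▸ h).1
      · intro p hp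
        simp only [hS, mem_filter, mem_univ, true_and] at hp
        obtain ⟨⟨⟨hlt, hinv'⟩, hp1⟩, hp2⟩ := hp
        have hp1L : p.1 ≠ L := Fin.ne_last_of_lt hlt
        rcases fin_cases_emb j p.1 with h | h | ⟨i, h⟩
        · exact absurd h hp1L
        · exact absurd h hp1
        · refine ⟨i, ?_, by rw [← h, ← hp2]⟩
          simp only [mem_filter, mem_univ, true_and]
          rw [hp2, hσL, h, hσe, hc] at hinv'
          exact castSucc_lt_emb_iff.1 hinv'
    have e2 := card_filter_perm_comp (α := Fin n) τ (fun v => (j : ℕ) ≤ (v : ℕ))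
    have e3 := card_filter_le_val n (j : ℕ)
    rw [e1, e2, e3]
  -- third part: inversions of τ
  have h3 : ((S.filter fun p => ¬ p.1 = c).filter fun p => ¬ p.2 = L).card = invNum τ := by
    rw [invNum]
    symm
    apply Finset.card_bij (fun (p : Fin n × Fin n) _ =>
      ((emb j p.1, emb j p.2) : Fin (n+2) × Fin (n+2)))
    · intro p hp
      simp only [mem_filter, mem_univ, true_and] at hp
      simp only [hS, mem_filter, mem_univ, true_and]
      exact ⟨⟨⟨emb_lt_emb_iff.2 hp.1, by rw [hσe, hσe]; exact emb_lt_emb_iff.2 hp.2⟩,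
        emb_ne_castSucc j p.1⟩, emb_ne_last j p.2⟩
    · intro a _ b _ h
      have := Prod.mk.injEq _ _ _ _ ▸ h
      exact Prod.ext (emb_injective j this.1) (emb_injective j this.2)
    · intro p hp
      simp only [hS, mem_filter, mem_univ, true_and] at hp
      obtain ⟨⟨⟨hlt, hinv'⟩, hp1⟩, hp2⟩ := hp
      have hp1L : p.1 ≠ L := Fin.ne_last_of_lt hlt
      have hp2c : p.2 ≠ c := by
        intro h
        rw [h, hσc] at hinv'
        exact absurd hinv' (Fin.not_lt.2 (Fin.le_last _))
      rcases fin_cases_emb j p.1 with h | h | ⟨a, ha⟩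
      · exact absurd h hp1L
      · exact absurd h hp1
      rcases fin_cases_emb j p.2 with h | h | ⟨b, hb⟩
      · exact absurd h hp2
      · exact absurd h hp2c
      refine ⟨(a, b), ?_, Prod.ext ha.symm hb.symm⟩
      simp only [mem_filter, mem_univ, true_and]
      rw [ha, hb] at hlt hinv'
      rw [hσe, hσe] at hinv'
      exact ⟨emb_lt_emb_iff.1 hlt, emb_lt_emb_iff.1 hinv'⟩
  have hjn : (j : ℕ) ≤ n := Nat.lt_succ_iff.1 j.isLt
  omega

end InvoRec

namespace InvoRec
open Equiv Finset

lemma invoCount_eq_card (h k : ℕ) [DecidablePred fun π : Equiv.Perm (Fin h) => π * π = 1 ∧ invNum π = k] :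
    invoCount h k = (univ.filter fun π : Equiv.Perm (Fin h) => π * π = 1 ∧ invNum π = k).card := by
  rw [invoCount, Nat.card_eq_fintype_card, Fintype.card_subtype]

lemma fiber_last (n k : ℕ) :
    ((univ : Finset (Equiv.Perm (Fin (n + 2)))).filter fun σ =>
        (σ * σ = 1 ∧ invNum σ = k) ∧ σ (Fin.last (n + 1)) = Fin.last (n + 1)).card
      = invoCount (n + 1) k := by
  classical
  rw [invoCount_eq_card]
  symm
  apply Finset.card_bij (fun π _ => extLast π)
  · intro π hπ
    simp only [mem_filter, mem_univ, true_and] at hπ ⊢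
    exact ⟨⟨(extLast_invol_iff π).2 hπ.1, (invNum_extLast π).trans hπ.2⟩, extLast_last π⟩
  · intro a _ b _ h
    exact extLast_injective h
  · intro σ hσ
    simp only [mem_filter, mem_univ, true_and] at hσ
    obtain ⟨⟨h2, hk⟩, hl⟩ := hσ
    obtain ⟨π, hπ⟩ := exists_extLast σ h2 hl
    refine ⟨π, ?_, hπ⟩
    simp only [mem_filter, mem_univ, true_and]
    constructor
    · rw [← extLast_invol_iff, hπ]; exact h2
    · rw [← invNum_extLast, hπ]; exact hk

lemma fiber_mid (n k : ℕ) (j : Fin (n + 1)) :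
    ((univ : Finset (Equiv.Perm (Fin (n + 2)))).filter fun σ =>
        (σ * σ = 1 ∧ invNum σ = k) ∧ σ (Fin.last (n + 1)) = Fin.castSucc j).card
      = if 2 * (n - (j : ℕ)) + 1 ≤ k then invoCount n (k - (2 * (n - (j : ℕ)) + 1)) else 0 := by
  classical
  set d := 2 * (n - (j : ℕ)) + 1 with hd
  split_ifs with hdk
  · rw [invoCount_eq_card]
    symm
    apply Finset.card_bij (fun τ _ => phi j τ)
    · intro τ hτ
      simp only [mem_filter, mem_univ, true_and] at hτ ⊢
      refine ⟨⟨(phi_invol_iff j τ).2 hτ.1, ?_⟩, phi_last j τ⟩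
      rw [invNum_phi, hτ.2, ← hd]
      omega
    · intro a _ b _ h
      exact phi_injective j h
    · intro σ hσ
      simp only [mem_filter, mem_univ, true_and] at hσ
      obtain ⟨⟨h2, hk⟩, hl⟩ := hσ
      obtain ⟨τ, hτ⟩ := exists_phi j σ h2 hl
      refine ⟨τ, ?_, hτ⟩
      simp only [mem_filter, mem_univ, true_and]
      have hi : invNum σ = invNum τ + d := by rw [← hτ, invNum_phi, hd]
      constructor
      · rw [← phi_invol_iff j, hτ]; exact h2
      · omega
  · rw [Finset.card_eq_zero, Finset.eq_empty_iff_forall_notMem]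
    intro σ hσ
    simp only [mem_filter, mem_univ, true_and] at hσ
    obtain ⟨⟨h2, hk⟩, hl⟩ := hσ
    obtain ⟨τ, hτ⟩ := exists_phi j σ h2 hl
    have hi : invNum σ = invNum τ + d := by rw [← hτ, invNum_phi, hd]
    omega

end InvoRec

open Finset InvoRec in
/-- For every `h ≥ 2` and `k ≥ 0`,
`T(h,k) = T(h−1,k) + Σ_{s=2}^{h} T(h−2, k−(2s−3))`, where a summand is interpreted
as `0` whenever `2s−3 > k`. -/
theorem invoCount_recursion (h k : ℕ) (hh : 2 ≤ h) :
    invoCount h k =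
      invoCount (h - 1) k +
        ∑ s ∈ Finset.Icc 2 h,
          (if 2 * s - 3 ≤ k then invoCount (h - 2) (k - (2 * s - 3)) else 0) := by
  classical
  obtain ⟨n, rfl⟩ : ∃ n, h = n + 2 := ⟨h - 2, by omega⟩
  have e1 : n + 2 - 1 = n + 1 := rfl
  have e2 : n + 2 - 2 = n := rfl
  rw [e1, e2, invoCount_eq_card]
  rw [Finset.card_eq_sum_card_fiberwise
    (f := fun σ : Equiv.Perm (Fin (n + 2)) => σ (Fin.last (n + 1))) (t := univ)
    (fun x _ => mem_univ _)]
  simp only [Finset.filter_filter]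
  rw [Fin.sum_univ_castSucc]
  rw [fiber_last n k]
  rw [add_comm]
  congr 1
  -- remaining: middle fibers sum = RHS sum
  have LHS : ∀ j : Fin (n + 1),
      ((univ : Finset (Equiv.Perm (Fin (n + 2)))).filter fun σ =>
        (σ * σ = 1 ∧ invNum σ = k) ∧ σ (Fin.last (n + 1)) = Fin.castSucc j).card
      = if 2 * (n - (j : ℕ)) + 1 ≤ k then invoCount n (k - (2 * (n - (j : ℕ)) + 1)) else 0 :=
    fun j => fiber_mid n k j
  calc ∑ j : Fin (n + 1),
        ((univ : Finset (Equiv.Perm (Fin (n + 2)))).filter fun σ =>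
          (σ * σ = 1 ∧ invNum σ = k) ∧ σ (Fin.last (n + 1)) = Fin.castSucc j).card
      = ∑ j : Fin (n + 1), (if 2 * (n - (j : ℕ)) + 1 ≤ k then
          invoCount n (k - (2 * (n - (j : ℕ)) + 1)) else 0) := by
        exact Finset.sum_congr rfl fun j _ => LHS j
    _ = ∑ v ∈ Finset.range (n + 1), (if 2 * (n - v) + 1 ≤ k then
          invoCount n (k - (2 * (n - v) + 1)) else 0) := by
        exact Fin.sum_univ_eq_sum_range
          (fun v => if 2 * (n - v) + 1 ≤ k then invoCount n (k - (2 * (n - v) + 1)) else 0) (n + 1)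
    _ = ∑ v ∈ Finset.range (n + 1), (if 2 * v + 1 ≤ k then
          invoCount n (k - (2 * v + 1)) else 0) := by
        rw [← Finset.sum_range_reflect]
        apply Finset.sum_congr rfl
        intro v hv
        rw [Finset.mem_range] at hv
        have h1v : n + 1 - 1 - v = n - v := by omega
        rw [h1v]
        have h2v : n - (n - v) = v := by omega
        rw [h2v]
    _ = ∑ s ∈ Finset.Icc 2 (n + 2), (if 2 * s - 3 ≤ k then
          invoCount n (k - (2 * s - 3)) else 0) := by
        apply Finset.sum_nbij' (i := fun v => v + 2) (j := fun s => s - 2)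
        · intro a ha
          rw [Finset.mem_range] at ha
          rw [Finset.mem_Icc]
          omega
        · intro a ha
          rw [Finset.mem_Icc] at ha
          rw [Finset.mem_range]
          omega
        · intro a ha; omega
        · intro a ha
          rw [Finset.mem_Icc] at ha
          omega
        · intro a ha
          have h1 : 2 * (a + 2) - 3 = 2 * a + 1 := by omega
          rw [h1]
end

section
/- For every h ≥ 1 and k ≥ 0, IT(h,k) + Σ_{s=1}^{h−1} Σ_{t=0}^{k} IT(s,t) · T(h−s, k−t) = T(h,k), where T(h,k) is the number of involutions of {1,…,h} with exactly k inversions and IT(s,t) is the number of irreducible involutions of {1,…,s} with exactly t inversions. -/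
open Finset Equiv
open scoped Classical

variable {h : ℕ}
def clAt (π : Perm (Fin h)) (u : ℕ) : Prop := ∀ i : Fin h, i.val < u → (π i).val < u

lemma clAt_exists (π : Perm (Fin h)) : ∃ u, 0 < u ∧ clAt π u :=
  ⟨h+1, Nat.succ_pos h, fun i _ => (π i).isLt.trans (Nat.lt_succ_self h)⟩

noncomputable def bSize (π : Perm (Fin h)) : ℕ := Nat.find (clAt_exists π)

lemma bSize_pos (π : Perm (Fin h)) : 0 < bSize π := (Nat.find_spec (clAt_exists π)).1

lemma clAt_bSize (π : Perm (Fin h)) : clAt π (bSize π) := (Nat.find_spec (clAt_exists π)).2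

lemma bSize_min {π : Perm (Fin h)} {u : ℕ} (h0 : 0 < u) (hc : clAt π u) : bSize π ≤ u :=
  Nat.find_le ⟨h0, hc⟩

lemma bSize_le (hh : 1 ≤ h) (π : Perm (Fin h)) : bSize π ≤ h :=
  bSize_min hh (fun i _ => (π i).isLt)

lemma clAt_compl {π : Perm (Fin h)} {s : ℕ} (hc : clAt π s) :
    ∀ i : Fin h, s ≤ i.val → s ≤ (π i).val := by
  intro i hi
  by_contra hlt
  push_neg at hlt
  set S : Finset (Fin h) := Finset.univ.filter (fun j => j.val < s) with hS
  have himg : S.image π = S := by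
    apply Finset.eq_of_subset_of_card_le
    · intro j hj
      simp only [hS, Finset.mem_image, Finset.mem_filter, Finset.mem_univ, true_and] at hj ⊢
      obtain ⟨a, ha, rfl⟩ := hj
      exact hc a ha
    · rw [Finset.card_image_of_injective _ π.injective]
  have : π i ∈ S := by
    simp only [hS, Finset.mem_filter, Finset.mem_univ, true_and]; exact hlt
  rw [← himg] at this
  simp only [Finset.mem_image] at this
  obtain ⟨a, ha, haeq⟩ := this
  have : a = i := π.injective haeq
  subst this
  simp only [hS, Finset.mem_filter] at ha
  omega

def glue (s : ℕ) (hs : s ≤ h) (σ : Perm (Fin s)) (τ : Perm (Fin (h - s))) :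
    Perm (Fin h) where
  toFun i := if hi : i.val < s then ⟨(σ ⟨i, hi⟩).val, (σ _).isLt.trans_le hs⟩
    else ⟨s + (τ ⟨i.val - s, by omega⟩).val, by have := (τ ⟨i.val - s, by omega⟩).isLt; omega⟩
  invFun i := if hi : i.val < s then ⟨(σ⁻¹ ⟨i, hi⟩).val, (σ⁻¹ _).isLt.trans_le hs⟩
    else ⟨s + (τ⁻¹ ⟨i.val - s, by omega⟩).val, by have := (τ⁻¹ ⟨i.val - s, by omega⟩).isLt; omega⟩
  left_inv i := by
    by_cases hi : i.val < s
    · simp only [dif_pos hi, (σ ⟨i, hi⟩).isLt, dif_pos]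
      ext
      simp
    · simp only [dif_neg hi]
      have h1 : ¬ (s + (τ ⟨i.val - s, by omega⟩).val < s) := by omega
      simp only [dif_neg h1]
      ext
      simp only []
      have : (⟨s + (τ ⟨i.val - s, by omega⟩).val - s, by omega⟩ : Fin (h - s)) = τ ⟨i.val - s, by omega⟩ := by
        ext; simp
      rw [this]
      simp
      omega
  right_inv i := by
    by_cases hi : i.val < s
    · simp only [dif_pos hi, (σ⁻¹ ⟨i, hi⟩).isLt, dif_pos]
      ext
      simp
    · simp only [dif_neg hi]
      have h1 : ¬ (s + (τ⁻¹ ⟨i.val - s, by omega⟩).val < s) := by omega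
      simp only [dif_neg h1]
      ext
      simp only []
      have : (⟨s + (τ⁻¹ ⟨i.val - s, by omega⟩).val - s, by omega⟩ : Fin (h - s)) = τ⁻¹ ⟨i.val - s, by omega⟩ := by
        ext; simp
      rw [this]
      simp
      omega

lemma glue_apply_lt {s : ℕ} (hs : s ≤ h) (σ : Perm (Fin s)) (τ : Perm (Fin (h - s)))
    {i : Fin h} (hi : i.val < s) :
    ((glue s hs σ τ) i).val = (σ ⟨i, hi⟩).val := by
  simp only [glue, Equiv.coe_fn_mk, dif_pos hi]

lemma glue_apply_ge {s : ℕ} (hs : s ≤ h) (σ : Perm (Fin s)) (τ : Perm (Fin (h - s)))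
    {i : Fin h} (hi : s ≤ i.val) :
    ((glue s hs σ τ) i).val = s + (τ ⟨i.val - s, Nat.sub_lt_sub_right hi i.isLt⟩).val := by
  simp only [glue, Equiv.coe_fn_mk, dif_neg (by omega : ¬ i.val < s)]

lemma glue_lt_iff {s : ℕ} (hs : s ≤ h) (σ : Perm (Fin s)) (τ : Perm (Fin (h - s)))
    (i : Fin h) : ((glue s hs σ τ) i).val < s ↔ i.val < s := by
  by_cases hi : i.val < s
  · simp [glue_apply_lt hs σ τ hi, hi, (σ ⟨i, hi⟩).isLt]
  · push_neg at hi
    simp [glue_apply_ge hs σ τ hi]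
    omega

lemma glue_glue_lt {s : ℕ} (hs : s ≤ h) (σ : Perm (Fin s)) (τ : Perm (Fin (h - s)))
    {i : Fin h} (hi : i.val < s) :
    ((glue s hs σ τ) ((glue s hs σ τ) i)).val = (σ (σ ⟨i, hi⟩)).val := by
  have h1 := glue_apply_lt hs σ τ hi
  have h2 : ((glue s hs σ τ) i).val < s := by rw [h1]; exact (σ _).isLt
  rw [glue_apply_lt hs σ τ h2]
  have he : (⟨((glue s hs σ τ) i).val, h2⟩ : Fin s) = σ ⟨i, hi⟩ := Fin.ext h1
  rw [he]

lemma glue_glue_ge {s : ℕ} (hs : s ≤ h) (σ : Perm (Fin s)) (τ : Perm (Fin (h - s)))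
    {i : Fin h} (hi : s ≤ i.val) :
    ((glue s hs σ τ) ((glue s hs σ τ) i)).val
      = s + (τ (τ ⟨i.val - s, Nat.sub_lt_sub_right hi i.isLt⟩)).val := by
  have h1 := glue_apply_ge hs σ τ hi
  have h2 : s ≤ ((glue s hs σ τ) i).val := by rw [h1]; omega
  rw [glue_apply_ge hs σ τ h2]
  have he : (⟨((glue s hs σ τ) i).val - s, Nat.sub_lt_sub_right h2 (Fin.isLt _)⟩ : Fin (h - s))
      = τ ⟨i.val - s, Nat.sub_lt_sub_right hi i.isLt⟩ := by
    apply Fin.ext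
    simp only [h1]
    omega
  rw [he]

lemma glue_invol_iff {s : ℕ} (hs : s ≤ h) (σ : Perm (Fin s)) (τ : Perm (Fin (h - s))) :
    glue s hs σ τ * glue s hs σ τ = 1 ↔ (σ * σ = 1 ∧ τ * τ = 1) := by
  constructor
  · intro H
    constructor
    · ext x
      have hx : (⟨x.val, x.isLt.trans_le hs⟩ : Fin h).val < s := x.isLt
      have := Equiv.ext_iff.mp H ⟨x.val, x.isLt.trans_le hs⟩
      rw [Equiv.Perm.mul_apply, Equiv.Perm.one_apply] at this
      have hv := glue_glue_lt hs σ τ hx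
      rw [this] at hv
      simp only [Equiv.Perm.mul_apply, Equiv.Perm.one_apply]
      have : (⟨(⟨x.val, x.isLt.trans_le hs⟩ : Fin h).val, hx⟩ : Fin s) = x := by ext; rfl
      rw [this] at hv
      simp only [Fin.val_mk] at hv
      omega
    · ext y
      have hy : s ≤ (⟨s + y.val, by have := y.isLt; omega⟩ : Fin h).val := by simp
      have := Equiv.ext_iff.mp H ⟨s + y.val, by have := y.isLt; omega⟩
      rw [Equiv.Perm.mul_apply, Equiv.Perm.one_apply] at this
      have hv := glue_glue_ge hs σ τ hy
      rw [this] at hv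
      simp only [Equiv.Perm.mul_apply, Equiv.Perm.one_apply]
      have he : (⟨(⟨s + y.val, by have := y.isLt; omega⟩ : Fin h).val - s,
          Nat.sub_lt_sub_right hy (Fin.isLt _)⟩ : Fin (h - s)) = y := by ext; simp
      rw [he] at hv
      simp only [Fin.val_mk] at hv
      omega
  · rintro ⟨h1, h2⟩
    ext i
    rw [Equiv.Perm.mul_apply, Equiv.Perm.one_apply]
    by_cases hi : i.val < s
    · have hv := glue_glue_lt hs σ τ hi
      have : σ (σ ⟨i.val, hi⟩) = ⟨i.val, hi⟩ := by
        have := Equiv.ext_iff.mp h1 ⟨i.val, hi⟩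
        rwa [Equiv.Perm.mul_apply, Equiv.Perm.one_apply] at this
      rw [this] at hv
      exact hv
    · push_neg at hi
      have hv := glue_glue_ge hs σ τ hi
      have : τ (τ ⟨i.val - s, Nat.sub_lt_sub_right hi i.isLt⟩) = ⟨i.val - s, Nat.sub_lt_sub_right hi i.isLt⟩ := by
        have := Equiv.ext_iff.mp h2 ⟨i.val - s, Nat.sub_lt_sub_right hi i.isLt⟩
        rwa [Equiv.Perm.mul_apply, Equiv.Perm.one_apply] at this
      rw [this] at hv
      simp only [Fin.val_mk] at hv
      omega

lemma glue_cross {s : ℕ} (hs : s ≤ h) (σ : Perm (Fin s)) (τ : Perm (Fin (h - s)))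
    {p : Fin h × Fin h} (hp : p.1 < p.2 ∧ (glue s hs σ τ) p.2 < (glue s hs σ τ) p.1) :
    (p.1.val < s ↔ p.2.val < s) := by
  obtain ⟨h1, h2⟩ := hp
  rw [Fin.lt_def] at h1 h2
  constructor
  · intro hlt
    by_contra hge
    push_neg at hge
    have a1 : ((glue s hs σ τ) p.1).val < s := by rw [glue_lt_iff]; exact hlt
    have a2 : ¬ ((glue s hs σ τ) p.2).val < s := by rw [glue_lt_iff]; omega
    omega
  · intro hlt
    omega

lemma glue_part1 {s : ℕ} (hs : s ≤ h) (σ : Perm (Fin s)) (τ : Perm (Fin (h - s))) :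
    (Finset.univ.filter fun p : Fin h × Fin h =>
      (p.1 < p.2 ∧ (glue s hs σ τ) p.2 < (glue s hs σ τ) p.1) ∧ p.2.val < s).card
      = invNum σ := by
  rw [invNum]
  refine Finset.card_bij'
    (fun p hp => ((⟨p.1.val, ?_⟩ : Fin s), (⟨p.2.val, ?_⟩ : Fin s)))
    (fun q _ => ((⟨q.1.val, q.1.isLt.trans_le hs⟩ : Fin h), (⟨q.2.val, q.2.isLt.trans_le hs⟩ : Fin h)))
    ?_ ?_ ?_ ?_
  · simp only [Finset.mem_filter, Finset.mem_univ, true_and] at hp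
    have := hp.1.1
    rw [Fin.lt_def] at this
    omega
  · simp only [Finset.mem_filter, Finset.mem_univ, true_and] at hp
    exact hp.2
  · intro p hp
    simp only [Finset.mem_filter, Finset.mem_univ, true_and] at hp ⊢
    obtain ⟨⟨h1, h2⟩, h3⟩ := hp
    have hp1 : p.1.val < s := by rw [Fin.lt_def] at h1; omega
    constructor
    · rw [Fin.lt_def] at h1 ⊢
      exact h1
    · rw [Fin.lt_def] at h2 ⊢
      rw [glue_apply_lt hs σ τ hp1, glue_apply_lt hs σ τ h3] at h2
      exact h2
  · intro q hq
    simp only [Finset.mem_filter, Finset.mem_univ, true_and] at hq ⊢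
    obtain ⟨h1, h2⟩ := hq
    have e1 : ((⟨q.1.val, q.1.isLt.trans_le hs⟩ : Fin h)).val < s := q.1.isLt
    have e2 : ((⟨q.2.val, q.2.isLt.trans_le hs⟩ : Fin h)).val < s := q.2.isLt
    refine ⟨⟨?_, ?_⟩, e2⟩
    · rw [Fin.lt_def] at h1 ⊢
      exact h1
    · rw [Fin.lt_def] at h2 ⊢
      rw [glue_apply_lt hs σ τ e1, glue_apply_lt hs σ τ e2]
      simpa using h2
  · intro p hp
    simp
  · intro q hq
    simp

lemma glue_part2 {s : ℕ} (hs : s ≤ h) (σ : Perm (Fin s)) (τ : Perm (Fin (h - s))) :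
    (Finset.univ.filter fun p : Fin h × Fin h =>
      (p.1 < p.2 ∧ (glue s hs σ τ) p.2 < (glue s hs σ τ) p.1) ∧ ¬ p.2.val < s).card
      = invNum τ := by
  rw [invNum]
  refine Finset.card_bij'
    (fun p hp => ((⟨p.1.val - s, ?_⟩ : Fin (h - s)), (⟨p.2.val - s, ?_⟩ : Fin (h - s))))
    (fun q _ => ((⟨s + q.1.val, by have := q.1.isLt; omega⟩ : Fin h),
      (⟨s + q.2.val, by have := q.2.isLt; omega⟩ : Fin h)))
    ?_ ?_ ?_ ?_
  · simp only [Finset.mem_filter, Finset.mem_univ, true_and] at hp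
    have := (glue_cross hs σ τ hp.1).mpr
    have := p.1.isLt
    omega
  · simp only [Finset.mem_filter, Finset.mem_univ, true_and] at hp
    have := p.2.isLt
    omega
  · intro p hp
    simp only [Finset.mem_filter, Finset.mem_univ, true_and] at hp ⊢
    obtain ⟨⟨h1, h2⟩, h3⟩ := hp
    have hp1 : s ≤ p.1.val := by
      by_contra hc
      push_neg at hc
      exact h3 ((glue_cross hs σ τ ⟨h1, h2⟩).mp hc)
    have hp2 : s ≤ p.2.val := by omega
    constructor
    · rw [Fin.lt_def] at h1 ⊢
      simp only [Fin.val_mk]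
      omega
    · rw [Fin.lt_def] at h2 ⊢
      rw [glue_apply_ge hs σ τ hp1, glue_apply_ge hs σ τ hp2] at h2
      have ea : (⟨p.1.val - s, Nat.sub_lt_sub_right hp1 p.1.isLt⟩ : Fin (h-s)) = ⟨p.1.val - s, by have := p.1.isLt; omega⟩ := rfl
      omega
  · intro q hq
    simp only [Finset.mem_filter, Finset.mem_univ, true_and] at hq ⊢
    obtain ⟨h1, h2⟩ := hq
    have e1 : s ≤ ((⟨s + q.1.val, by have := q.1.isLt; omega⟩ : Fin h)).val := by simp
    have e2 : s ≤ ((⟨s + q.2.val, by have := q.2.isLt; omega⟩ : Fin h)).val := by simp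
    refine ⟨⟨?_, ?_⟩, by simp⟩
    · rw [Fin.lt_def] at h1 ⊢
      simp only [Fin.val_mk]
      omega
    · rw [Fin.lt_def] at h2 ⊢
      rw [glue_apply_ge hs σ τ e1, glue_apply_ge hs σ τ e2]
      have ea : (⟨(⟨s + q.1.val, by have := q.1.isLt; omega⟩ : Fin h).val - s, Nat.sub_lt_sub_right e1 (Fin.isLt _)⟩ : Fin (h-s)) = q.1 := by
        apply Fin.ext; simp
      have eb : (⟨(⟨s + q.2.val, by have := q.2.isLt; omega⟩ : Fin h).val - s, Nat.sub_lt_sub_right e2 (Fin.isLt _)⟩ : Fin (h-s)) = q.2 := by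
        apply Fin.ext; simp
      rw [ea, eb]
      omega
  · intro p hp
    simp only [Finset.mem_filter, Finset.mem_univ, true_and] at hp
    obtain ⟨⟨h1, h2⟩, h3⟩ := hp
    have hp1 : s ≤ p.1.val := by
      by_contra hc
      push_neg at hc
      exact h3 ((glue_cross hs σ τ ⟨h1, h2⟩).mp hc)
    have : p.1 < p.2 := h1
    rw [Fin.lt_def] at this
    ext <;> simp <;> omega
  · intro q hq
    ext <;> simp

lemma invNum_glue {s : ℕ} (hs : s ≤ h) (σ : Perm (Fin s)) (τ : Perm (Fin (h - s))) :
    invNum (glue s hs σ τ) = invNum σ + invNum τ := by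
  rw [invNum]
  rw [← Finset.card_filter_add_card_filter_not (p := fun p : Fin h × Fin h => p.2.val < s)]
  rw [Finset.filter_filter, Finset.filter_filter]
  rw [glue_part1 hs σ τ, glue_part2 hs σ τ]

noncomputable def tpart (π : Perm (Fin h)) : ℕ :=
  (Finset.univ.filter fun p : Fin h × Fin h =>
    (p.1 < p.2 ∧ π p.2 < π p.1) ∧ p.2.val < bSize π).card

lemma tpart_le_invNum (π : Perm (Fin h)) : tpart π ≤ invNum π := by
  apply Finset.card_le_card
  intro p hp
  simp only [Finset.mem_filter] at hp ⊢
  exact ⟨hp.1, hp.2.1⟩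

lemma glue_inj {s : ℕ} (hs : s ≤ h) {σ σ' : Perm (Fin s)} {τ τ' : Perm (Fin (h - s))}
    (heq : glue s hs σ τ = glue s hs σ' τ') : σ = σ' ∧ τ = τ' := by
  constructor
  · ext x
    have hx : (⟨x.val, x.isLt.trans_le hs⟩ : Fin h).val < s := x.isLt
    have h1 := glue_apply_lt hs σ τ hx
    have h2 := glue_apply_lt hs σ' τ' hx
    rw [heq] at h1
    have : (⟨(⟨x.val, x.isLt.trans_le hs⟩ : Fin h).val, hx⟩ : Fin s) = x := rfl
    rw [this] at h1 h2
    omega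
  · ext y
    have hy : s ≤ (⟨s + y.val, by have := y.isLt; omega⟩ : Fin h).val := by simp
    have h1 := glue_apply_ge hs σ τ hy
    have h2 := glue_apply_ge hs σ' τ' hy
    rw [heq] at h1
    have : (⟨(⟨s + y.val, by have := y.isLt; omega⟩ : Fin h).val - s,
        Nat.sub_lt_sub_right hy (Fin.isLt _)⟩ : Fin (h - s)) = y := by apply Fin.ext; simp
    rw [this] at h1 h2
    omega

noncomputable def restFst {s : ℕ} (hs : s ≤ h) (π : Perm (Fin h)) (hc : clAt π s) :
    Perm (Fin s) :=
  Equiv.ofBijective (fun x => ⟨(π ⟨x.val, x.isLt.trans_le hs⟩).val, hc _ x.isLt⟩)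
    (Finite.injective_iff_bijective.mp (fun x y hxy => by
      have : (π ⟨x.val, x.isLt.trans_le hs⟩).val = (π ⟨y.val, y.isLt.trans_le hs⟩).val :=
        Fin.mk.inj hxy
      have := π.injective (Fin.ext this)
      have := congrArg Fin.val this
      exact Fin.ext this))

lemma restFst_apply {s : ℕ} (hs : s ≤ h) (π : Perm (Fin h)) (hc : clAt π s) (x : Fin s) :
    ((restFst hs π hc) x).val = (π ⟨x.val, x.isLt.trans_le hs⟩).val := rfl

noncomputable def restSnd {s : ℕ} (hs : s ≤ h) (π : Perm (Fin h)) (hc : clAt π s) :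
    Perm (Fin (h - s)) :=
  Equiv.ofBijective (fun y => ⟨(π ⟨s + y.val, by have := y.isLt; omega⟩).val - s, by
      have h1 := clAt_compl hc ⟨s + y.val, by have := y.isLt; omega⟩ (by simp)
      have h2 := (π ⟨s + y.val, by have := y.isLt; omega⟩).isLt
      omega⟩)
    (Finite.injective_iff_bijective.mp (fun x y hxy => by
      have hvx := clAt_compl hc ⟨s + x.val, by have := x.isLt; omega⟩ (by simp)
      have hvy := clAt_compl hc ⟨s + y.val, by have := y.isLt; omega⟩ (by simp)
      have h0 : (π ⟨s + x.val, by have := x.isLt; omega⟩).val - s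
          = (π ⟨s + y.val, by have := y.isLt; omega⟩).val - s := Fin.mk.inj hxy
      have h1 : (π ⟨s + x.val, by have := x.isLt; omega⟩).val
          = (π ⟨s + y.val, by have := y.isLt; omega⟩).val := by omega
      have := π.injective (Fin.ext h1)
      have := congrArg Fin.val this
      simp only [Fin.val_mk] at this
      exact Fin.ext (by omega)))

lemma restSnd_apply {s : ℕ} (hs : s ≤ h) (π : Perm (Fin h)) (hc : clAt π s) (y : Fin (h - s)) :
    ((restSnd hs π hc) y).val = (π ⟨s + y.val, by have := y.isLt; omega⟩).val - s := rfl

lemma glue_rest {s : ℕ} (hs : s ≤ h) (π : Perm (Fin h)) (hc : clAt π s) :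
    glue s hs (restFst hs π hc) (restSnd hs π hc) = π := by
  ext i
  by_cases hi : i.val < s
  · rw [glue_apply_lt hs _ _ hi, restFst_apply]
  · push_neg at hi
    rw [glue_apply_ge hs _ _ hi, restSnd_apply]
    have he : (⟨s + (⟨i.val - s, Nat.sub_lt_sub_right hi i.isLt⟩ : Fin (h - s)).val,
        by have := i.isLt; simp; omega⟩ : Fin h) = i := by apply Fin.ext; simp; omega
    rw [he]
    have := clAt_compl hc i hi
    omega

lemma bSize_glue {s : ℕ} (hs1 : 1 ≤ s) (hs : s ≤ h) (σ : Perm (Fin s)) (τ : Perm (Fin (h - s)))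
    (hirr : IrredPerm σ) : bSize (glue s hs σ τ) = s := by
  have hcl : clAt (glue s hs σ τ) s := fun i hi => by
    rw [glue_lt_iff]; exact hi
  refine le_antisymm (bSize_min hs1 hcl) ?_
  by_contra hlt
  push_neg at hlt
  apply hirr
  refine ⟨bSize (glue s hs σ τ), bSize_pos _, hlt, ?_⟩
  intro x hx
  have hxs : x.val < s := x.isLt
  have := clAt_bSize (glue s hs σ τ) ⟨x.val, x.isLt.trans_le hs⟩ hx
  rw [glue_apply_lt hs σ τ hxs] at this
  have he : (⟨(⟨x.val, x.isLt.trans_le hs⟩ : Fin h).val, hxs⟩ : Fin s) = x := rfl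
  rw [he] at this
  exact this

lemma irred_restFst {s : ℕ} (hs : s ≤ h) (π : Perm (Fin h)) (hb : bSize π = s) :
    IrredPerm (restFst hs π (hb ▸ clAt_bSize π)) := by
  rintro ⟨u, hu0, hus, hcl⟩
  have hclπ : clAt π u := by
    intro i hi
    have his : i.val < s := by omega
    have := hcl ⟨i.val, his⟩ hi
    rw [restFst_apply] at this
    have he : (⟨(⟨i.val, his⟩ : Fin s).val, by have := i.isLt; exact lt_of_lt_of_le his hs⟩ : Fin h) = i := rfl
    rwa [he] at this
  have := bSize_min hu0 hclπ
  omega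

lemma tpart_glue {s : ℕ} (hs1 : 1 ≤ s) (hs : s ≤ h) (σ : Perm (Fin s)) (τ : Perm (Fin (h - s)))
    (hirr : IrredPerm σ) : tpart (glue s hs σ τ) = invNum σ := by
  rw [tpart, bSize_glue hs1 hs σ τ hirr]
  exact glue_part1 hs σ τ

lemma invoCount_eq (n m : ℕ) : invoCount n m =
    (Finset.univ.filter fun π : Perm (Fin n) => π * π = 1 ∧ invNum π = m).card := by
  rw [invoCount, Nat.card_eq_fintype_card, Fintype.card_subtype]

lemma irrInvoCount_eq (n m : ℕ) : irrInvoCount n m =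
    (Finset.univ.filter fun π : Perm (Fin n) => π * π = 1 ∧ IrredPerm π ∧ invNum π = m).card := by
  rw [irrInvoCount, Nat.card_eq_fintype_card, Fintype.card_subtype]

lemma invoCount_zero (m : ℕ) : invoCount 0 m = if m = 0 then 1 else 0 := by
  have hinv : ∀ π : Perm (Fin 0), invNum π = 0 := by
    intro π
    rw [invNum]
    simp
  split_ifs with hm
  · subst hm
    rw [invoCount, Nat.card_eq_fintype_card, Fintype.card_eq_one_iff]
    exact ⟨⟨1, Subsingleton.elim _ _, hinv 1⟩, fun b => Subtype.ext (Subsingleton.elim _ _)⟩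
  · rw [invoCount, Nat.card_eq_fintype_card, Fintype.card_eq_zero_iff]
    exact ⟨fun x => hm (x.2.2 ▸ (hinv x.1).symm ▸ rfl)⟩

lemma main_card {h : ℕ} (k s t : ℕ) (hs1 : 1 ≤ s) (hsh : s ≤ h) (htk : t ≤ k) :
    (Finset.univ.filter fun π : Perm (Fin h) =>
      (π * π = 1 ∧ invNum π = k) ∧ bSize π = s ∧ tpart π = t).card
    = irrInvoCount s t * invoCount (h - s) (k - t) := by
  rw [irrInvoCount_eq, invoCount_eq, ← Finset.card_product]
  symm
  refine Finset.card_bij (fun q _ => glue s hsh q.1 q.2) ?_ ?_ ?_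
  · intro q hq
    simp only [Finset.mem_product, Finset.mem_filter, Finset.mem_univ, true_and] at hq ⊢
    obtain ⟨⟨hq1, hq2, hq3⟩, hq4, hq5⟩ := hq
    have hb : bSize (glue s hsh q.1 q.2) = s := bSize_glue hs1 hsh q.1 q.2 hq2
    refine ⟨⟨(glue_invol_iff hsh q.1 q.2).mpr ⟨hq1, hq4⟩, ?_⟩, hb, ?_⟩
    · rw [invNum_glue hsh q.1 q.2, hq3, hq5]
      omega
    · rw [tpart_glue hs1 hsh q.1 q.2 hq2, hq3]
  · intro q hq q' hq' heq
    obtain ⟨e1, e2⟩ := glue_inj hsh heq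
    exact Prod.ext e1 e2
  · intro π hπ
    simp only [Finset.mem_filter, Finset.mem_univ, true_and] at hπ
    obtain ⟨⟨hinvol, hinv⟩, hb, ht⟩ := hπ
    have hc : clAt π s := hb ▸ clAt_bSize π
    set σ := restFst hsh π hc with hσ
    set τ := restSnd hsh π hc with hτ
    have hg : glue s hsh σ τ = π := glue_rest hsh π hc
    have hbg : bSize (glue s hsh σ τ) = s := by rw [hg]; exact hb
    have hpair := (glue_invol_iff hsh σ τ).mp (by rw [hg]; exact hinvol)
    have hirr : IrredPerm σ := irred_restFst hsh π hb
    have hinvsum : invNum σ + invNum τ = k := by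
      rw [← invNum_glue hsh σ τ, hg]; exact hinv
    have htp : invNum σ = t := by
      have := tpart_glue hs1 hsh σ τ hirr
      rw [hg] at this
      omega
    refine ⟨(σ, τ), ?_, hg⟩
    simp only [Finset.mem_product, Finset.mem_filter, Finset.mem_univ, true_and]
    exact ⟨⟨hpair.1, hirr, htp⟩, hpair.2, by omega⟩
/-- For every `h ≥ 1` and `k ≥ 0`,
`IT(h,k) + Σ_{s=1}^{h−1} Σ_{t=0}^{k} IT(s,t) · T(h−s, k−t) = T(h,k)`. -/
theorem irrInvoCount_recursion (h k : ℕ) (hh : 1 ≤ h) :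
    irrInvoCount h k +
      ∑ s ∈ Finset.Icc 1 (h - 1), ∑ t ∈ Finset.range (k + 1),
        irrInvoCount s t * invoCount (h - s) (k - t) = invoCount h k := by
  have key : invoCount h k = ∑ s ∈ Finset.Icc 1 h, ∑ t ∈ Finset.range (k + 1),
      irrInvoCount s t * invoCount (h - s) (k - t) := by
    rw [invoCount_eq]
    rw [Finset.card_eq_sum_card_fiberwise (f := bSize) (t := Finset.Icc 1 h)
      (fun π hπ => Finset.mem_Icc.mpr ⟨bSize_pos π, bSize_le hh π⟩)]
    refine Finset.sum_congr rfl fun s hs => ?_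
    obtain ⟨hs1, hsh⟩ := Finset.mem_Icc.mp hs
    rw [Finset.card_eq_sum_card_fiberwise (f := tpart) (t := Finset.range (k + 1))
      (fun π hπ => ?_)]
    · refine Finset.sum_congr rfl fun t ht => ?_
      rw [Finset.filter_filter, Finset.filter_filter]
      exact main_card k s t hs1 hsh (Nat.lt_succ_iff.mp (Finset.mem_range.mp ht))
    · simp only [Finset.mem_coe, Finset.mem_filter, Finset.mem_univ, true_and] at hπ
      rw [Finset.mem_coe, Finset.mem_range, Nat.lt_succ_iff]
      calc tpart π ≤ invNum π := tpart_le_invNum π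
        _ = k := hπ.1.2
  rw [key]
  obtain ⟨h', rfl⟩ : ∃ h', h = h' + 1 := ⟨h - 1, by omega⟩
  rw [Finset.sum_Icc_succ_top (by omega : 1 ≤ h' + 1)]
  simp only [Nat.add_sub_cancel]
  have last : ∑ t ∈ Finset.range (k + 1),
      irrInvoCount (h' + 1) t * invoCount (h' + 1 - (h' + 1)) (k - t) = irrInvoCount (h' + 1) k := by
    rw [Finset.sum_eq_single k]
    · simp [invoCount_zero]
    · intro t ht hne
      have htk : t < k := by
        have := Finset.mem_range.mp ht
        omega
      rw [Nat.sub_self, invoCount_zero]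
      have : ¬ (k - t = 0) := by omega
      rw [if_neg this, mul_zero]
    · intro hk
      exact absurd (Finset.self_mem_range_succ k) hk
  rw [last]
  ring
end

section
/- Let m, n, k ≥ 1, let 1 ≤ i_1 < i_2 < ⋯ < i_k ≤ m, and let j_1, …, j_k be pairwise distinct elements of {1,…,n}. Let β be the join of the join-congruences cg(i_1,j_1), …, cg(i_k,j_k) of the grid K_{m,n}. Then the number of equivalence classes of β satisfies, as an identity of integers: |K_{m,n}/β| = (m+1)(n+1) + inv(τ) − k(m+n+2) + Σ_{s=1}^{k} (i_s + j_s), where inv(τ) denotes the number of pairs (s,t) with 1 ≤ s < t ≤ k and j_s > j_t. -/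
/-- The grid `K_{m,n}`: the lattice `{0,…,m} × {0,…,n}` ordered componentwise
(join and meet are componentwise max and min). -/
abbrev Grid (m n : ℕ) := Fin (m + 1) × Fin (n + 1)

/-- A join-congruence of a join-semilattice: an equivalence relation compatible with
joining a fixed element. -/
def IsJoinCong {α : Type*} [SemilatticeSup α] (r : α → α → Prop) : Prop :=
  Equivalence r ∧ ∀ a b c : α, r a b → r (a ⊔ c) (b ⊔ c)

/-- The join-congruence generated by a relation `R`: the smallest join-congruence
containing `R` (the intersection of all join-congruences containing `R`). -/
def joinCongGen {α : Type*} [SemilatticeSup α] (R : α → α → Prop) : α → α → Prop :=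
  fun a b => ∀ r : α → α → Prop, IsJoinCong r → (∀ x y, R x y → r x y) → r a b

/-- The join of a family of join-congruences: the smallest join-congruence containing
all members of the family. -/
def joinCongSup {α : Type*} [SemilatticeSup α] {ι : Sort*} (f : ι → α → α → Prop) :
    α → α → Prop :=
  joinCongGen fun a b => ∃ i, f i a b

open Fin.NatCast in
/-- For `1 ≤ i ≤ m` and `1 ≤ j ≤ n`, the join-congruence `cg(i,j)` of the grid `K_{m,n}`
generated by the pairs `((i,j−1),(i,j))` and `((i−1,j),(i,j))`. -/
def cg (m n i j : ℕ) : Grid m n → Grid m n → Prop :=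
  joinCongGen fun a b =>
    b = ((i : Fin (m + 1)), (j : Fin (n + 1))) ∧
      (a = ((i : Fin (m + 1)), ((j - 1 : ℕ) : Fin (n + 1))) ∨
        a = (((i - 1 : ℕ) : Fin (m + 1)), (j : Fin (n + 1))))

namespace GridCong

lemma joinCongGen_isJoinCong {α : Type*} [SemilatticeSup α] (R : α → α → Prop) :
    IsJoinCong (joinCongGen R) := by
  constructor
  · constructor
    · exact fun a r hr _ => hr.1.refl a
    · exact fun h r hr hR => hr.1.symm (h r hr hR)
    · exact fun h1 h2 r hr hR => hr.1.trans (h1 r hr hR) (h2 r hr hR)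
  · exact fun a b c h r hr hR => hr.2 a b c (h r hr hR)

lemma le_joinCongGen {α : Type*} [SemilatticeSup α] {R : α → α → Prop} {x y : α}
    (h : R x y) : joinCongGen R x y := fun _ _ hR => hR x y h

section Grid

variable {m n k : ℕ} (i j : Fin k → ℕ)

/-- lower-to-upper edges of the merge graph -/
def Edge (a b : Grid m n) : Prop :=
  (∃ s, a.1 = b.1 ∧ (a.2 : ℕ) + 1 = j s ∧ (b.2 : ℕ) = j s ∧ i s ≤ (a.1 : ℕ)) ∨
  (∃ s, a.2 = b.2 ∧ (a.1 : ℕ) + 1 = i s ∧ (b.1 : ℕ) = i s ∧ j s ≤ (a.2 : ℕ))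

def Step (a b : Grid m n) : Prop := Edge i j a b ∨ Edge i j b a

def Beta : Grid m n → Grid m n → Prop := Relation.ReflTransGen (Step i j)

lemma step_symm : Symmetric (Step (m := m) (n := n) i j) := fun _ _ h => h.symm

lemma beta_equiv : Equivalence (Beta (m := m) (n := n) i j) :=
  ⟨fun _ => Relation.ReflTransGen.refl,
   fun h => by
     haveI : Std.Symm (Step (m := m) (n := n) i j) := ⟨step_symm i j⟩
     exact Std.Symm.symm (r := Relation.ReflTransGen (Step i j)) _ _ h,
   fun h1 h2 => Relation.ReflTransGen.trans h1 h2⟩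

lemma edge_le {a b : Grid m n} (h : Edge i j a b) : a ≤ b := by
  rcases h with ⟨s, h1, h2, h3, _⟩ | ⟨s, h1, h2, h3, _⟩
  · exact ⟨le_of_eq h1, Fin.le_def.2 (by omega)⟩
  · exact ⟨Fin.le_def.2 (by omega), le_of_eq h1⟩

lemma edge_sup {a b c : Grid m n} (h : Edge i j a b) :
    Beta i j (a ⊔ c) (b ⊔ c) := by
  rcases h with ⟨s, h1, h2, h3, h4⟩ | ⟨s, h1, h2, h3, h4⟩
  · rcases le_or_gt b.2 c.2 with hc | hc
    · have ha : a.2 ≤ c.2 := le_trans (Fin.le_def.2 (by omega)) hc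
      have : a ⊔ c = b ⊔ c := by
        have : a.2 ⊔ c.2 = b.2 ⊔ c.2 := by rw [sup_eq_right.2 ha, sup_eq_right.2 hc]
        rw [Prod.sup_def, Prod.sup_def, h1, this]
      rw [this]
      exact Relation.ReflTransGen.refl
    · have hc' : c.2 ≤ a.2 := Fin.le_def.2 (by have := Fin.lt_def.1 hc; omega)
      refine Relation.ReflTransGen.single (Or.inl (Or.inl ⟨s, ?_, ?_, ?_, ?_⟩))
      · simp [Prod.sup_def, h1]
      · simp [Prod.sup_def, sup_eq_left.2 hc', h2]
      · simp [Prod.sup_def, sup_eq_left.2 hc.le, h3]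
      · simp only [Prod.sup_def]
        exact le_trans h4 (by exact_mod_cast Fin.le_def.1 (le_sup_left : a.1 ≤ a.1 ⊔ c.1))
  · rcases le_or_gt b.1 c.1 with hc | hc
    · have ha : a.1 ≤ c.1 := le_trans (Fin.le_def.2 (by omega)) hc
      have : a ⊔ c = b ⊔ c := by
        have : a.1 ⊔ c.1 = b.1 ⊔ c.1 := by rw [sup_eq_right.2 ha, sup_eq_right.2 hc]
        rw [Prod.sup_def, Prod.sup_def, h1, this]
      rw [this]
      exact Relation.ReflTransGen.refl
    · have hc' : c.1 ≤ a.1 := Fin.le_def.2 (by have := Fin.lt_def.1 hc; omega)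
      refine Relation.ReflTransGen.single (Or.inl (Or.inr ⟨s, ?_, ?_, ?_, ?_⟩))
      · simp [Prod.sup_def, h1]
      · simp [Prod.sup_def, sup_eq_left.2 hc', h2]
      · simp [Prod.sup_def, sup_eq_left.2 hc.le, h3]
      · simp only [Prod.sup_def]
        exact le_trans h4 (by exact_mod_cast Fin.le_def.1 (le_sup_left : a.2 ≤ a.2 ⊔ c.2))

lemma beta_isJoinCong : IsJoinCong (Beta (m := m) (n := n) i j) := by
  refine ⟨beta_equiv i j, fun a b c h => ?_⟩
  induction h with
  | refl => exact Relation.ReflTransGen.refl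
  | tail _ hstep ih =>
    refine Relation.ReflTransGen.trans ih ?_
    rcases hstep with he | he
    · exact edge_sup i j he
    · exact (beta_equiv i j).symm (edge_sup i j he)

end Grid

open Fin.NatCast in
lemma val_cast_of_le {N c : ℕ} (h : c ≤ N) : ((c : Fin (N + 1)) : ℕ) = c :=
  Fin.val_cast_of_lt (by omega)

section Grid2
variable {m n k : ℕ} {i j : Fin k → ℕ}

open Fin.NatCast in
lemma beta_eq (him : ∀ s, i s ≤ m) (hjn : ∀ s, j s ≤ n)
    (hi1 : ∀ s, 1 ≤ i s) (hj1 : ∀ s, 1 ≤ j s) (a b : Grid m n) :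
    joinCongSup (fun s : Fin k => cg m n (i s) (j s)) a b ↔ Beta i j a b := by
  constructor
  · intro h
    refine h (Beta i j) (beta_isJoinCong i j) ?_
    rintro x y ⟨s, hcg⟩
    refine hcg (Beta i j) (beta_isJoinCong i j) ?_
    rintro x' y' ⟨rfl, (rfl | rfl)⟩
    · refine Relation.ReflTransGen.single (Or.inl (Or.inl ⟨s, rfl, ?_, ?_, ?_⟩))
      · show (((j s - 1 : ℕ) : Fin (n + 1)) : ℕ) + 1 = j s
        rw [val_cast_of_le (by have := hjn s; omega)]; have := hj1 s; omega
      · exact val_cast_of_le (hjn s)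
      · show i s ≤ ((i s : Fin (m + 1)) : ℕ)
        rw [val_cast_of_le (him s)]
    · refine Relation.ReflTransGen.single (Or.inl (Or.inr ⟨s, rfl, ?_, ?_, ?_⟩))
      · show (((i s - 1 : ℕ) : Fin (m + 1)) : ℕ) + 1 = i s
        rw [val_cast_of_le (by have := him s; omega)]; have := hi1 s; omega
      · exact val_cast_of_le (him s)
      · show j s ≤ ((j s : Fin (n + 1)) : ℕ)
        rw [val_cast_of_le (hjn s)]
  · intro h
    set β := joinCongSup (fun s : Fin k => cg m n (i s) (j s)) with hβ
    have hjc : IsJoinCong β := joinCongGen_isJoinCong _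
    have hedge : ∀ x y : Grid m n, Edge i j x y → β x y := by
      rintro x y (⟨s, h1, h2, h3, h4⟩ | ⟨s, h1, h2, h3, h4⟩)
      · have hgen : β ((i s : Fin (m + 1)), (((j s : ℕ) - 1 : ℕ) : Fin (n + 1)))
            ((i s : Fin (m + 1)), (j s : Fin (n + 1))) :=
          le_joinCongGen ⟨s, le_joinCongGen ⟨rfl, Or.inl rfl⟩⟩
        have hc := hjc.2 _ _ (x.1, (0 : Fin (n + 1))) hgen
        rw [Prod.mk_sup_mk, Prod.mk_sup_mk] at hc
        have eq1 : (i s : Fin (m + 1)) ⊔ x.1 = x.1 :=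
          sup_eq_right.2 (Fin.le_def.2 (by rw [val_cast_of_le (him s)]; exact h4))
        have eqx : (((j s : ℕ) - 1 : ℕ) : Fin (n + 1)) ⊔ 0 = x.2 := by
          rw [sup_eq_left.2 (Fin.zero_le _)]
          exact Fin.ext (by rw [val_cast_of_le (by have := hjn s; omega)]; omega)
        have eqy : (j s : Fin (n + 1)) ⊔ 0 = y.2 := by
          rw [sup_eq_left.2 (Fin.zero_le _)]
          exact Fin.ext (by rw [val_cast_of_le (hjn s)]; omega)
        rw [eq1, eqx, eqy] at hc
        rwa [show (x.1, x.2) = x from rfl, show (x.1, y.2) = y from Prod.ext h1 rfl] at hc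
      · have hgen : β ((((i s : ℕ) - 1 : ℕ) : Fin (m + 1)), (j s : Fin (n + 1)))
            ((i s : Fin (m + 1)), (j s : Fin (n + 1))) :=
          le_joinCongGen ⟨s, le_joinCongGen ⟨rfl, Or.inr rfl⟩⟩
        have hc := hjc.2 _ _ ((0 : Fin (m + 1)), x.2) hgen
        rw [Prod.mk_sup_mk, Prod.mk_sup_mk] at hc
        have eq1 : (j s : Fin (n + 1)) ⊔ x.2 = x.2 :=
          sup_eq_right.2 (Fin.le_def.2 (by rw [val_cast_of_le (hjn s)]; exact h4))
        have eqx : (((i s : ℕ) - 1 : ℕ) : Fin (m + 1)) ⊔ 0 = x.1 := by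
          rw [sup_eq_left.2 (Fin.zero_le _)]
          exact Fin.ext (by rw [val_cast_of_le (by have := him s; omega)]; omega)
        have eqy : (i s : Fin (m + 1)) ⊔ 0 = y.1 := by
          rw [sup_eq_left.2 (Fin.zero_le _)]
          exact Fin.ext (by rw [val_cast_of_le (him s)]; omega)
        rw [eq1, eqx, eqy] at hc
        rwa [show (x.1, x.2) = x from rfl, show (y.1, x.2) = y from Prod.ext rfl h1] at hc
    induction h with
    | refl => exact hjc.1.refl a
    | tail _ hstep ih =>
      refine hjc.1.trans ih ?_
      rcases hstep with he | he
      · exact hedge _ _ he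
      · exact hjc.1.symm (hedge _ _ he)

end Grid2

section Count
variable {m n k : ℕ} (i j : Fin k → ℕ)

def Mov (a : Grid m n) : Prop :=
  (∃ s, (a.2 : ℕ) + 1 = j s ∧ i s ≤ (a.1 : ℕ)) ∨
  (∃ s, (a.1 : ℕ) + 1 = i s ∧ j s ≤ (a.2 : ℕ))

instance : DecidablePred (Mov (m := m) (n := n) i j) := fun a => by
  unfold Mov; infer_instance

variable {i j}

lemma beta_le {b : Grid m n} (hb : ¬ Mov i j b) {a : Grid m n}
    (h : Beta i j b a) : a ≤ b := by
  induction h with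
  | refl => exact le_refl b
  | tail _ hstep ih =>
    rename_i x a _
    rcases hstep with he | he
    · rcases he with ⟨s, h1, h2, h3, h4⟩ | ⟨s, h1, h2, h3, h4⟩
      · refine ⟨h1 ▸ ih.1, ?_⟩
        by_contra hle
        have hba : b.2 < a.2 := lt_of_not_ge hle
        have hxb : (x.2 : ℕ) ≤ (b.2 : ℕ) := Fin.le_def.1 ih.2
        have hb2 : (b.2 : ℕ) + 1 = j s := by
          have := Fin.lt_def.1 hba; omega
        exact hb (Or.inl ⟨s, hb2, le_trans h4 (Fin.le_def.1 (h1 ▸ ih.1 : x.1 ≤ b.1))⟩)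
      · refine ⟨?_, h1 ▸ ih.2⟩
        by_contra hle
        have hba : b.1 < a.1 := lt_of_not_ge hle
        have hxb : (x.1 : ℕ) ≤ (b.1 : ℕ) := Fin.le_def.1 ih.1
        have hb1 : (b.1 : ℕ) + 1 = i s := by
          have := Fin.lt_def.1 hba; omega
        exact hb (Or.inr ⟨s, hb1, le_trans h4 (Fin.le_def.1 (h1 ▸ ih.2 : x.2 ≤ b.2))⟩)
    · exact le_trans (edge_le i j he) ih

lemma reach (hjn : ∀ s, j s ≤ n) (him : ∀ s, i s ≤ m) (a : Grid m n) :
    ∃ b, Beta i j a b ∧ ¬ Mov i j b := by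
  suffices H : ∀ (f : ℕ) (a : Grid m n), m + n - ((a.1 : ℕ) + (a.2 : ℕ)) ≤ f →
      ∃ b, Beta i j a b ∧ ¬ Mov i j b by
    exact H (m + n) a (by omega)
  intro f
  induction f with
  | zero =>
    intro a ha
    refine ⟨a, Relation.ReflTransGen.refl, ?_⟩
    rintro (⟨s, h1, h2⟩ | ⟨s, h1, h2⟩)
    · have := hjn s; have h2' : (a.2 : ℕ) ≤ n := by omega
      have : (a.1 : ℕ) ≤ m := by omega
      omega
    · have := him s; have := a.1.isLt; have := a.2.isLt; omega
  | succ f ihf =>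
    intro a ha
    by_cases hM : Mov i j a
    · rcases hM with ⟨s, h1, h2⟩ | ⟨s, h1, h2⟩
      · have hlt : j s < n + 1 := by have := hjn s; omega
        set b : Grid m n := (a.1, ⟨j s, hlt⟩) with hbdef
        have he : Edge i j a b := Or.inl ⟨s, rfl, h1, rfl, h2⟩
        obtain ⟨c, hc1, hc2⟩ := ihf b (by
          have e1 : (b.1 : ℕ) = (a.1 : ℕ) := rfl
          have e2 : (b.2 : ℕ) = j s := rfl
          have := a.1.isLt; omega)
        exact ⟨c, Relation.ReflTransGen.trans
          (Relation.ReflTransGen.single (Or.inl he)) hc1, hc2⟩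
      · have hlt : i s < m + 1 := by have := him s; omega
        set b : Grid m n := (⟨i s, hlt⟩, a.2) with hbdef
        have he : Edge i j a b := Or.inr ⟨s, rfl, h1, rfl, h2⟩
        obtain ⟨c, hc1, hc2⟩ := ihf b (by
          have e1 : (b.2 : ℕ) = (a.2 : ℕ) := rfl
          have e2 : (b.1 : ℕ) = i s := rfl
          have := a.2.isLt; omega)
        exact ⟨c, Relation.ReflTransGen.trans
          (Relation.ReflTransGen.single (Or.inl he)) hc1, hc2⟩
    · exact ⟨a, Relation.ReflTransGen.refl, hM⟩

lemma ncard_classes (hjn : ∀ s, j s ≤ n) (him : ∀ s, i s ≤ m) :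
    Set.ncard {C : Set (Grid m n) | ∃ a, C = {b | Beta i j a b}} =
      (Finset.univ.filter fun b : Grid m n => ¬ Mov i j b).card := by
  classical
  have hbij : Set.BijOn (fun a : Grid m n => {b | Beta i j a b})
      {b : Grid m n | ¬ Mov i j b}
      {C : Set (Grid m n) | ∃ a, C = {b | Beta i j a b}} := by
    refine ⟨fun b _ => ⟨b, rfl⟩, ?_, ?_⟩
    · intro b hb b' hb' hEq
      have h1 : Beta i j b b' := by
        have h2 := Set.ext_iff.1 hEq b'
        simp only [Set.mem_setOf_eq] at h2
        exact h2.2 ((beta_equiv i j).refl b')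
      exact le_antisymm (beta_le hb' ((beta_equiv i j).symm h1)) (beta_le hb h1)
    · rintro C ⟨a, rfl⟩
      obtain ⟨b, hab, hnb⟩ := reach hjn him a
      refine ⟨b, hnb, ?_⟩
      ext x
      exact ⟨fun h => (beta_equiv i j).trans hab h,
        fun h => (beta_equiv i j).trans ((beta_equiv i j).symm hab) h⟩
  rw [← hbij.image_eq, Set.ncard_image_of_injOn hbij.injOn,
    Set.ncard_eq_toFinset_card', Set.toFinset_setOf]

end Count

section Cards
variable {m n k : ℕ} {i j : Fin k → ℕ}

lemma card_filter_le_fin (N c : ℕ) :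
    (Finset.univ.filter fun x : Fin (N + 1) => c ≤ (x : ℕ)).card = N + 1 - c := by
  rw [← Nat.card_Ico c (N + 1)]
  refine Finset.card_bij (fun x _ => (x : ℕ)) ?_ ?_ ?_
  · intro x hx
    simp only [Finset.mem_filter] at hx
    exact Finset.mem_Ico.2 ⟨hx.2, x.isLt⟩
  · intro x _ y _ h; exact Fin.ext h
  · intro b hb
    rw [Finset.mem_Ico] at hb
    exact ⟨⟨b, hb.2⟩, Finset.mem_filter.2 ⟨Finset.mem_univ _, hb.1⟩, rfl⟩

lemma card_filter_succ_eq (N t : ℕ) (h1 : 1 ≤ t) (h2 : t ≤ N) :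
    (Finset.univ.filter fun x : Fin (N + 1) => (x : ℕ) + 1 = t).card = 1 := by
  have : (Finset.univ.filter fun x : Fin (N + 1) => (x : ℕ) + 1 = t) =
      {(⟨t - 1, by omega⟩ : Fin (N + 1))} := by
    ext x
    simp only [Finset.mem_filter, Finset.mem_univ, true_and, Finset.mem_singleton,
      Fin.ext_iff]
    omega
  rw [this, Finset.card_singleton]

lemma card_up (hjinj : Function.Injective j) (hj1 : ∀ s, 1 ≤ j s) (hjn : ∀ s, j s ≤ n) :
    (Finset.univ.filter fun b : Grid m n =>
        ∃ s, (b.2 : ℕ) + 1 = j s ∧ i s ≤ (b.1 : ℕ)).card =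
      ∑ s : Fin k, (m + 1 - i s) := by
  classical
  have heq : (Finset.univ.filter fun b : Grid m n =>
      ∃ s, (b.2 : ℕ) + 1 = j s ∧ i s ≤ (b.1 : ℕ)) =
      Finset.univ.biUnion (fun s : Fin k =>
        Finset.univ.filter fun b : Grid m n => i s ≤ (b.1 : ℕ) ∧ (b.2 : ℕ) + 1 = j s) := by
    ext b
    simp only [Finset.mem_filter, Finset.mem_univ, true_and, Finset.mem_biUnion]
    tauto
  rw [heq, Finset.card_biUnion]
  · refine Finset.sum_congr rfl fun s _ => ?_
    rw [← Finset.univ_product_univ,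
      Finset.filter_product (fun a : Fin (m + 1) => i s ≤ (a : ℕ))
        (fun a : Fin (n + 1) => (a : ℕ) + 1 = j s),
      Finset.card_product, card_filter_le_fin,
      card_filter_succ_eq n (j s) (hj1 s) (hjn s), mul_one]
  · intro s _ t _ hst
    simp only [Function.onFun]
    rw [Finset.disjoint_left]
    intro b hb hb'
    rw [Finset.mem_filter] at hb hb'
    exact hst (hjinj (by omega))

lemma card_right (hiinj : Function.Injective i) (hi1 : ∀ s, 1 ≤ i s) (him : ∀ s, i s ≤ m) :
    (Finset.univ.filter fun b : Grid m n =>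
        ∃ s, (b.1 : ℕ) + 1 = i s ∧ j s ≤ (b.2 : ℕ)).card =
      ∑ s : Fin k, (n + 1 - j s) := by
  classical
  have heq : (Finset.univ.filter fun b : Grid m n =>
      ∃ s, (b.1 : ℕ) + 1 = i s ∧ j s ≤ (b.2 : ℕ)) =
      Finset.univ.biUnion (fun s : Fin k =>
        Finset.univ.filter fun b : Grid m n => (b.1 : ℕ) + 1 = i s ∧ j s ≤ (b.2 : ℕ)) := by
    ext b
    simp only [Finset.mem_filter, Finset.mem_univ, true_and, Finset.mem_biUnion]
  rw [heq, Finset.card_biUnion]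
  · refine Finset.sum_congr rfl fun s _ => ?_
    rw [← Finset.univ_product_univ,
      Finset.filter_product (fun a : Fin (m + 1) => (a : ℕ) + 1 = i s)
        (fun a : Fin (n + 1) => j s ≤ (a : ℕ)),
      Finset.card_product, card_filter_succ_eq m (i s) (hi1 s) (him s),
      card_filter_le_fin, one_mul]
  · intro s _ t _ hst
    simp only [Function.onFun]
    rw [Finset.disjoint_left]
    intro b hb hb'
    rw [Finset.mem_filter] at hb hb'
    exact hst (hiinj (by omega))

lemma card_both (hmono : StrictMono i) (hi1 : ∀ s, 1 ≤ i s) (him : ∀ s, i s ≤ m)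
    (hjinj : Function.Injective j) (hj1 : ∀ s, 1 ≤ j s) (hjn : ∀ s, j s ≤ n) :
    (Finset.univ.filter fun p : Fin k × Fin k => p.1 < p.2 ∧ j p.2 < j p.1).card =
      (Finset.univ.filter fun b : Grid m n =>
        (∃ s, (b.2 : ℕ) + 1 = j s ∧ i s ≤ (b.1 : ℕ)) ∧
        (∃ s, (b.1 : ℕ) + 1 = i s ∧ j s ≤ (b.2 : ℕ))).card := by
  classical
  refine Finset.card_bij (fun p _ =>
    ((⟨i p.2 - 1, by have := him p.2; omega⟩ : Fin (m + 1)),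
     (⟨j p.1 - 1, by have := hjn p.1; omega⟩ : Fin (n + 1)))) ?_ ?_ ?_
  · intro p hp
    rw [Finset.mem_filter] at hp
    obtain ⟨-, hlt, hjlt⟩ := hp
    refine Finset.mem_filter.2 ⟨Finset.mem_univ _, ⟨p.1, ?_, ?_⟩, ⟨p.2, ?_, ?_⟩⟩
    · show j p.1 - 1 + 1 = j p.1; have := hj1 p.1; omega
    · show i p.1 ≤ i p.2 - 1; have := hmono hlt; omega
    · show i p.2 - 1 + 1 = i p.2; have := hi1 p.2; omega
    · show j p.2 ≤ j p.1 - 1; omega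
  · intro p _ q _ h
    rw [Prod.ext_iff, Fin.ext_iff, Fin.ext_iff] at h
    simp only at h
    have h2 : i p.2 = i q.2 := by have := hi1 p.2; have := hi1 q.2; omega
    have h1 : j p.1 = j q.1 := by have := hj1 p.1; have := hj1 q.1; omega
    exact Prod.ext (hjinj h1) (hmono.injective h2)
  · intro b hb
    rw [Finset.mem_filter] at hb
    obtain ⟨-, ⟨s, hs1, hs2⟩, ⟨t, ht1, ht2⟩⟩ := hb
    refine ⟨(s, t), Finset.mem_filter.2 ⟨Finset.mem_univ _, ?_, ?_⟩, ?_⟩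
    · exact hmono.lt_iff_lt.1 (show i s < i t by omega)
    · show j t < j s; omega
    · exact Prod.ext (Fin.ext (by show i t - 1 = (b.1 : ℕ); omega))
        (Fin.ext (by show j s - 1 = (b.2 : ℕ); omega))

end Cards

end GridCong

/-- Let `1 ≤ i_1 < ⋯ < i_k ≤ m` and let `j_1,…,j_k` be pairwise distinct elements of
`{1,…,n}`.  For the join `β` of the join-congruences `cg(i_s, j_s)` of the grid
`K_{m,n}`, the number of `β`-classes equals
`(m+1)(n+1) + inv(τ) − k(m+n+2) + Σ_{s=1}^{k}(i_s + j_s)` (an identity of integers),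
where `inv(τ)` is the number of pairs `s < t` with `j_s > j_t`. -/


theorem card_grid_quotient (m n k : ℕ) (hm : 1 ≤ m) (hn : 1 ≤ n) (hk : 1 ≤ k)
    (i j : Fin k → ℕ)
    (hmono : StrictMono i) (hi1 : ∀ s, 1 ≤ i s) (him : ∀ s, i s ≤ m)
    (hjinj : Function.Injective j) (hj1 : ∀ s, 1 ≤ j s) (hjn : ∀ s, j s ≤ n) :
    (Set.ncard {C : Set (Grid m n) |
        ∃ a, C = {b | joinCongSup (fun s : Fin k => cg m n (i s) (j s)) a b}} : ℤ) =
      (m + 1) * (n + 1)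
        + ((Finset.univ.filter fun p : Fin k × Fin k => p.1 < p.2 ∧ j p.2 < j p.1).card : ℤ)
        - k * (m + n + 2) + ∑ s : Fin k, ((i s : ℤ) + (j s : ℤ)) := by
  classical
  have hset : {C : Set (Grid m n) |
      ∃ a, C = {b | joinCongSup (fun s : Fin k => cg m n (i s) (j s)) a b}} =
      {C : Set (Grid m n) | ∃ a, C = {b | GridCong.Beta i j a b}} := by
    have hcl : ∀ a : Grid m n,
        {b | joinCongSup (fun s : Fin k => cg m n (i s) (j s)) a b} =
        {b | GridCong.Beta i j a b} :=
      fun a => Set.ext fun b => GridCong.beta_eq him hjn hi1 hj1 a b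
    ext C
    simp only [Set.mem_setOf_eq, hcl]
  rw [hset, GridCong.ncard_classes hjn him]
  set N := (Finset.univ.filter fun b : Grid m n => ¬ GridCong.Mov i j b).card with hN
  set M := (Finset.univ.filter fun b : Grid m n => GridCong.Mov i j b).card with hM
  have h1 : M + N = (m + 1) * (n + 1) := by
    rw [hM, hN, Finset.card_filter_add_card_filter_not, Finset.card_univ]
    simp [Fintype.card_prod]
  have hMsplit : (Finset.univ.filter fun b : Grid m n => GridCong.Mov i j b) =
      (Finset.univ.filter fun b : Grid m n =>
        (∃ s, (b.2 : ℕ) + 1 = j s ∧ i s ≤ (b.1 : ℕ)) ∨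
        (∃ s, (b.1 : ℕ) + 1 = i s ∧ j s ≤ (b.2 : ℕ))) := by
    apply Finset.filter_congr
    intro b _
    exact Iff.rfl
  have h2 : M + (Finset.univ.filter fun b : Grid m n =>
        (∃ s, (b.2 : ℕ) + 1 = j s ∧ i s ≤ (b.1 : ℕ)) ∧
        (∃ s, (b.1 : ℕ) + 1 = i s ∧ j s ≤ (b.2 : ℕ))).card =
      (Finset.univ.filter fun b : Grid m n =>
        ∃ s, (b.2 : ℕ) + 1 = j s ∧ i s ≤ (b.1 : ℕ)).card +
      (Finset.univ.filter fun b : Grid m n =>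
        ∃ s, (b.1 : ℕ) + 1 = i s ∧ j s ≤ (b.2 : ℕ)).card := by
    rw [hM, hMsplit, Finset.filter_or, Finset.filter_and,
      Finset.card_union_add_card_inter]
  rw [GridCong.card_up hjinj hj1 hjn, GridCong.card_right hmono.injective hi1 him] at h2
  rw [← GridCong.card_both hmono hi1 him hjinj hj1 hjn] at h2
  have cA : ((∑ s : Fin k, (m + 1 - i s) : ℕ) : ℤ) =
      k * (m + 1) - ∑ s : Fin k, (i s : ℤ) := by
    rw [Nat.cast_sum,
      Finset.sum_congr rfl (fun s _ => show ((m + 1 - i s : ℕ) : ℤ) = (m + 1 : ℤ) - i s by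
        have := him s; omega),
      Finset.sum_sub_distrib, Finset.sum_const, Finset.card_univ, Fintype.card_fin]
    push_cast; ring
  have cB : ((∑ s : Fin k, (n + 1 - j s) : ℕ) : ℤ) =
      k * (n + 1) - ∑ s : Fin k, (j s : ℤ) := by
    rw [Nat.cast_sum,
      Finset.sum_congr rfl (fun s _ => show ((n + 1 - j s : ℕ) : ℤ) = (n + 1 : ℤ) - j s by
        have := hjn s; omega),
      Finset.sum_sub_distrib, Finset.sum_const, Finset.card_univ, Fintype.card_fin]
    push_cast; ring
  have e1 : (M : ℤ) + N = ((m : ℤ) + 1) * ((n : ℤ) + 1) := by exact_mod_cast h1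
  have e2 : (M : ℤ) +
      ((Finset.univ.filter fun p : Fin k × Fin k => p.1 < p.2 ∧ j p.2 < j p.1).card : ℤ) =
      ((∑ s : Fin k, (m + 1 - i s) : ℕ) : ℤ) + ((∑ s : Fin k, (n + 1 - j s) : ℕ) : ℤ) := by
    exact_mod_cast h2
  rw [Finset.sum_add_distrib]
  have hr : (k : ℤ) * (m + n + 2) = k * (m + 1) + k * (n + 1) := by ring
  push_cast
  linarith [e1, e2, cA, cB, hr]
end
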